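/- arXiv:2207.05311 — 6 statements merged into one kernel-verified Lean document; each statement's English description precedes it below -/
import Mathlib

section
/- If f: U → V is a proper monomorphism of representations of (P,θ), then setting W₀ = coker(f: U₀ → V₀) with quotient map g, and W_z = g^z(V_z) for each z ∈ θ, the pair (W₀, W_z)_{z∈θ} is a representation of (P,θ), and for each z the sequence 0 → U_z → V_z → W_z → 0 is exact. -/
open scoped Classical

/-! ## Posets with involution and their vector-space representations -/

structure PosetInv (P : Type) [PartialOrder P] where
  σ : P → P
  invol : ∀ x, σ (σ x) = x

namespace PosetInv

variable {P : Type} [PartialOrder P]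

/-- The equivalence relation whose classes are `{x, σ x}`. -/
def r (I : PosetInv P) (x y : P) : Prop := y = x ∨ y = I.σ x

theorem r_refl (I : PosetInv P) (x : P) : I.r x x := Or.inl rfl

theorem r_symm (I : PosetInv P) {x y : P} (h : I.r x y) : I.r y x := by
  rcases h with rfl | rfl
  · exact Or.inl rfl
  · exact Or.inr (I.invol x).symm

theorem r_trans (I : PosetInv P) {x y z : P} (h1 : I.r x y) (h2 : I.r y z) : I.r x z := by
  rcases h1 with rfl | rfl
  · exact h2
  · rcases h2 with rfl | rfl
    · exact Or.inr rfl
    · rw [I.invol]; exact Or.inl rfl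

def setoid (I : PosetInv P) : Setoid P := ⟨I.r, ⟨I.r_refl, I.r_symm, I.r_trans⟩⟩

/-- The set `θ` of equivalence classes. -/
def Classes (I : PosetInv P) : Type := Quotient I.setoid

/-- The class `[x]` of an element. -/
def cls (I : PosetInv P) (x : P) : I.Classes := Quotient.mk I.setoid x

/-- The underlying set of elements of a class. -/
def carrier (I : PosetInv P) : I.Classes → Set P :=
  Quotient.lift (fun x => {y | I.r x y}) (by
    intro a b hab
    ext y
    constructor
    · intro h; exact I.r_trans (I.r_symm hab) h
    · intro h; exact I.r_trans hab h)

theorem mem_cls (I : PosetInv P) (x : P) : x ∈ I.carrier (I.cls x) := I.r_refl x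

theorem sigma_mem_cls (I : PosetInv P) (x : P) : I.σ x ∈ I.carrier (I.cls x) := Or.inr rfl

end PosetInv

open PosetInv

/-- A vector-space representation `V = (V₀, V_z)_{z ∈ θ}` of the poset with involution
`(P, θ)`:  a finite-dimensional space `V₀` together with, for each class `z`, a subspace
`V_z ⊆ V₀^z` (functions on the class), satisfying `V_y⁺ ⊆ V_x⁻` for `y < x`. -/
structure RepI (k : Type) [Field k] {P : Type} [PartialOrder P] (I : PosetInv P) where
  V0 : Type
  [acg : AddCommGroup V0]
  [mod : Module k V0]
  [fd : FiniteDimensional k V0]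
  Vz : ∀ z : I.Classes, Submodule k (↥(I.carrier z) → V0)
  compat : ∀ ⦃x y : P⦄, y < x → ∀ h ∈ Vz (I.cls y),
    (fun w : ↥(I.carrier (I.cls x)) => if (w : P) = x then h ⟨y, I.mem_cls y⟩ else 0)
      ∈ Vz (I.cls x)

attribute [instance] RepI.acg RepI.mod RepI.fd

variable {k : Type} [Field k] {P : Type} [PartialOrder P] {I : PosetInv P}

/-- A morphism of representations:  a linear map `φ : V₀ → W₀` with `φ^z(V_z) ⊆ W_z`. -/
@[ext]
structure Hom (V W : RepI k I) where
  φ : V.V0 →ₗ[k] W.V0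
  maps : ∀ z, ∀ h ∈ V.Vz z, (fun w => φ (h w)) ∈ W.Vz z

namespace Hom

def comp {U V W : RepI k I} (g : Hom V W) (f : Hom U V) : Hom U W :=
  ⟨g.φ ∘ₗ f.φ, fun z h hh => g.maps z _ (f.maps z h hh)⟩

def idH (V : RepI k I) : Hom V V := ⟨LinearMap.id, fun _ _ hh => hh⟩

def zeroH (V W : RepI k I) : Hom V W :=
  ⟨0, fun z _ _ => (W.Vz z).zero_mem⟩

end Hom

/-- `f` is a proper epimorphism:  surjective on `V₀` and on each `V_z`. -/
def ProperEpi {V W : RepI k I} (f : Hom V W) : Prop :=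
  Function.Surjective f.φ ∧
    ∀ z, ∀ g ∈ W.Vz z, ∃ h ∈ V.Vz z, (fun w => f.φ (h w)) = g

/-- `f` is a proper monomorphism:  injective on `U₀`, and the elements of `V_z` all of whose
coordinates lie in the image of `f` are exactly the images of elements of `U_z`. -/
def ProperMono {U V : RepI k I} (f : Hom U V) : Prop :=
  Function.Injective f.φ ∧
    ∀ z, ∀ h ∈ V.Vz z, (∀ w, h w ∈ LinearMap.range f.φ) →
      ∃ g ∈ U.Vz z, (fun w => f.φ (g w)) = h

/-- `(u, v)` is an `ε`-sequence:  `0 → U₀ → V₀ → W₀ → 0` and each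
`0 → U_z → V_z → W_z → 0` is exact. -/
def IsEpsSeq {U V W : RepI k I} (u : Hom U V) (v : Hom V W) : Prop :=
  Function.Injective u.φ ∧ Function.Surjective v.φ ∧
    LinearMap.range u.φ = LinearMap.ker v.φ ∧
    ∀ z, (∀ h ∈ W.Vz z, ∃ g ∈ V.Vz z, (fun w => v.φ (g w)) = h) ∧
      (∀ g ∈ V.Vz z, (fun w => v.φ (g w)) = 0 →
        ∃ p ∈ U.Vz z, (fun w => u.φ (p w)) = g)

/-- If `f : U → V` is a proper monomorphism, then with
`W₀ = coker (f : U₀ → V₀)` (quotient map `g = mkQ`) and `W_z = g^z (V_z)`,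
the pair `(W₀, W_z)` is a representation of `(P, θ)` (the compatibility condition holds),
and for each `z` the sequence `0 → U_z → V_z → W_z → 0` is exact. -/
theorem cokernel_is_representation_and_exact
    {k : Type} [Field k] {P : Type} [PartialOrder P] {I : PosetInv P}
    {U V : RepI k I} (f : Hom U V) (hf : ProperMono f) :
    -- the quotient space, the quotient map, and the image subspaces `W_z`
    ∀ (Q : Type) (_ : AddCommGroup Q), ∀ _ : Module k Q, ∀ g : V.V0 →ₗ[k] Q,
      Function.Surjective g → LinearMap.ker g = LinearMap.range f.φ →
      ∀ Wz : ∀ z : I.Classes, Submodule k (↥(I.carrier z) → Q),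
      (∀ z, Wz z = Submodule.map (LinearMap.compLeft g ↥(I.carrier z)) (V.Vz z)) →
      -- (1) `(W₀, W_z)` is a representation:
      ((∀ ⦃x y : P⦄, y < x → ∀ h ∈ Wz (I.cls y),
          (fun w : ↥(I.carrier (I.cls x)) => if (w : P) = x then h ⟨y, I.mem_cls y⟩ else 0)
            ∈ Wz (I.cls x)) ∧
      -- (2) `0 → U_z → V_z → W_z → 0` is exact for every `z`:
        (∀ z : I.Classes,
          -- injectivity of `f^z` on `U_z`
          (∀ p ∈ U.Vz z, (fun w => f.φ (p w)) = 0 → p = 0) ∧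
          -- exactness at `V_z`
          (∀ h ∈ V.Vz z, (fun w => g (h w)) = 0 →
            ∃ p ∈ U.Vz z, (fun w => f.φ (p w)) = h) ∧
          -- exactness of the composite and surjectivity of `g^z : V_z → W_z`
          (∀ p ∈ U.Vz z, (fun w => g (f.φ (p w))) = 0) ∧
          (∀ q ∈ Wz z, ∃ h ∈ V.Vz z, (fun w => g (h w)) = q))) := by
  intro Q _ _ g hgsurj hker Wz hW
  constructor
  · -- compatibility
    intro x y hxy h hh
    rw [hW] at hh ⊢
    obtain ⟨h', hh', rfl⟩ := hh
    refine ⟨fun w : ↥(I.carrier (I.cls x)) => if (w : P) = x then h' ⟨y, I.mem_cls y⟩ else 0,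
      V.compat hxy h' hh', ?_⟩
    funext w
    by_cases hw : (w : P) = x <;>
      simp [hw]
  · intro z
    refine ⟨?_, ?_, ?_, ?_⟩
    · intro p hp h0
      funext w
      have := congrFun h0 w
      exact hf.1 (by simpa using this)
    · intro h hh h0
      refine hf.2 z h hh fun w => ?_
      rw [← hker]
      exact congrFun h0 w
    · intro p hp
      funext w
      have : f.φ (p w) ∈ LinearMap.ker g := by
        rw [hker]; exact ⟨p w, rfl⟩
      simpa using this
    · intro q hq
      rw [hW] at hq
      obtain ⟨h, hh, rfl⟩ := hq
      exact ⟨h, hh, rfl⟩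
end

section
/- The representation S = (k, 0)_{z∈θ} of a poset with involution (P,θ), with S₀ = k one-dimensional and S_z = 0 for all z ∈ θ, is ε-projective: for every proper epimorphism g: E → V and every morphism f: S → V there exists h: S → E with g∘h = f. -/
open scoped Classical

open PosetInv

variable {k : Type} [Field k] {P : Type} [PartialOrder P] {I : PosetInv P}

variable (k : Type) [Field k] {P : Type} [PartialOrder P] (I : PosetInv P)

/-- The trivial representation `S = (k, 0)`. -/
def SRep : RepI k I where
  V0 := k
  Vz := fun _ => ⊥
  compat := by
    intro x y _ h hh
    rw [Submodule.mem_bot] at hh ⊢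
    subst hh
    funext w
    simp

/-- The trivial representation `S = (k, 0)` is `ε`-projective:  for every
proper epimorphism `g : E → V` and every morphism `f : S → V` there is `h : S → E` with
`g ∘ h = f`. -/
theorem SRep_projective (k : Type) [Field k] {P : Type} [PartialOrder P] (I : PosetInv P) :
    ∀ (E V : RepI k I) (g : Hom E V), ProperEpi g →
      ∀ f : Hom (SRep k I) V, ∃ h : Hom (SRep k I) E, Hom.comp g h = f := by
  intro E V g hg f
  obtain ⟨e, he⟩ := hg.1 (f.φ (show (SRep k I).V0 from (1:k)))
  refine ⟨⟨LinearMap.toSpanSingleton k E.V0 e, ?_⟩, ?_⟩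
  · intro z h hh
    have : h = 0 := (Submodule.mem_bot k).mp hh
    subst this
    simp only [Pi.zero_apply, map_zero]
    convert (E.Vz z).zero_mem using 1
    funext w
    exact (LinearMap.toSpanSingleton k E.V0 e).map_zero
  · apply Hom.ext
    apply LinearMap.ext_ring
    show g.φ ((1:k) • e) = f.φ (show (SRep k I).V0 from (1:k))
    exact (congrArg g.φ (one_smul k e)).trans he
end

section
/- For every w ∈ θ, the representation P(w) of (P,θ) is ε-projective: every morphism from P(w) to the target of a proper epimorphism lifts along it. -/
open scoped Classical

open PosetInv

variable {k : Type} [Field k] {P : Type} [PartialOrder P] {I : PosetInv P}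

variable {k : Type} [Field k] {P : Type} [PartialOrder P]

/-- The generating set of `P(w)_z` for a class `z = (a₁, b₁)`:  the functions
`(λ(a,a₁)e₁, 0), (0, λ(a,b₁)e₁), (λ(b,a₁)e₂, 0), (0, λ(b,b₁)e₂)`, where `e_c = g c` for `c`
in the class of `a`; i.e. all `i_{x'} (g c)` with `c < x'`. -/
def genset (I : PosetInv P) (a : P) {V0 : Type} [AddCommGroup V0]
    (g : ↥(I.carrier (I.cls a)) → V0) (z : I.Classes) : Set (↥(I.carrier z) → V0) :=
  {f | ∃ (x' : ↥(I.carrier z)) (c : ↥(I.carrier (I.cls a))),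
    (c : P) < (x' : P) ∧ f = fun w => if w = x' then g c else 0}

/-- `Q` is (isomorphic to) the representation `P(w)` for the class `w = [a]`:  there is a
basis of `Q₀` indexed by the class of `a` (so `e₁ = B a`, `e₂ = B b`, or a single `e` for a
singleton class), `Q_w` is spanned by the generator `B` together with `genset`, and every
other `Q_z` is spanned by `genset`. -/
def IsPw {I : PosetInv P} (Q : RepI k I) (a : P) : Prop :=
  ∃ B : Module.Basis ↥(I.carrier (I.cls a)) k Q.V0,
    Q.Vz (I.cls a) = Submodule.span k ({⇑B} ∪ genset I a ⇑B (I.cls a)) ∧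
    ∀ z, z ≠ I.cls a → Q.Vz z = Submodule.span k (genset I a ⇑B z)

/-- A representation is `ε`-projective if every morphism to the target of a proper
epimorphism (= `ε`-deflation) lifts along it. -/
def EpsProjective {k : Type} [Field k] {P : Type} [PartialOrder P] {I : PosetInv P}
    (Q : RepI k I) : Prop :=
  ∀ (E V : RepI k I) (g : Hom E V), ProperEpi g →
    ∀ f : Hom Q V, ∃ h : Hom Q E, Hom.comp g h = f

lemma cls_eq_of_mem {P : Type} [PartialOrder P] (I : PosetInv P) {z : I.Classes} {x : P}
    (hx : x ∈ I.carrier z) : I.cls x = z := by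
  revert hx
  refine Quotient.inductionOn z (fun b hx => ?_)
  exact Quotient.sound (I.r_symm hx)

lemma Vz_cast {k : Type} [Field k] {P : Type} [PartialOrder P] {I : PosetInv P}
    (E : RepI k I) {z z' : I.Classes} (h : z = z')
    (p : ↥(I.carrier z) → E.V0) (hp : p ∈ E.Vz z) :
    (fun w : ↥(I.carrier z') => p ⟨w.1, h.symm ▸ w.2⟩) ∈ E.Vz z' := by
  subst h; exact hp

/-- For every class `w = [a] ∈ θ`, the representation `P(w)` is
`ε`-projective. -/
theorem Pw_projective
    {k : Type} [Field k] {P : Type} [PartialOrder P] {I : PosetInv P}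
    (a : P) (Q : RepI k I) (hQ : IsPw Q a) : EpsProjective Q := by
  obtain ⟨B, hBa, hBz⟩ := hQ
  intro E V g hg f
  obtain ⟨gsurj, gVz⟩ := hg
  have hfB : (fun w => f.φ (⇑B w)) ∈ V.Vz (I.cls a) := by
    apply f.maps
    rw [hBa]
    exact Submodule.subset_span (Or.inl rfl)
  obtain ⟨q, hq, hgq⟩ := gVz (I.cls a) _ hfB
  set φh : Q.V0 →ₗ[k] E.V0 := B.constr k q with hφh
  have hbasis : ∀ w, φh (B w) = q w := fun w => B.constr_basis k q w
  -- images of generating-set elements lie in `E.Vz z`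
  have genmem : ∀ z, ∀ s ∈ genset I a ⇑B z, (fun w => φh (s w)) ∈ E.Vz z := by
    rintro z _ ⟨x', c, hlt, rfl⟩
    have hc : I.cls (c : P) = I.cls a := cls_eq_of_mem I c.2
    have hx' : I.cls (x' : P) = z := cls_eq_of_mem I x'.2
    have hq' := Vz_cast E hc.symm q hq
    have hcompat := E.compat hlt _ hq'
    have hfin := Vz_cast E hx' _ hcompat
    convert hfin using 1
    funext w
    simp only [apply_ite (⇑φh), map_zero, hbasis, Subtype.coe_eta, ← Subtype.coe_inj]
  have hmaps : ∀ z, ∀ p ∈ Q.Vz z, (fun w => φh (p w)) ∈ E.Vz z := by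
    intro z p hp
    have hsub : Q.Vz z ≤
        Submodule.comap (LinearMap.compLeft φh ↥(I.carrier z)) (E.Vz z) := by
      rcases eq_or_ne z (I.cls a) with hz | hz
      · subst hz
        rw [hBa]
        refine Submodule.span_le.mpr ?_
        rintro s (rfl | hs)
        · show (fun w => φh (⇑B w)) ∈ E.Vz (I.cls a)
          simpa [hbasis] using hq
        · exact genmem _ s hs
      · rw [hBz z hz]
        refine Submodule.span_le.mpr ?_
        intro s hs
        exact genmem z s hs
    exact hsub hp
  refine ⟨⟨φh, hmaps⟩, ?_⟩
  apply Hom.ext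
  refine B.ext fun w => ?_
  show g.φ (φh (B w)) = f.φ (B w)
  rw [hbasis]
  exact congrFun hgq w
end

section
/- If w = (a,b) ∈ θ with a and b incomparable, or w a singleton, then End(P(w)) ≅ k. If w = (a,b) with a < b, then End(P(w)) is isomorphic to k[x]/(x²), namely the algebra of 2×2 upper triangular matrices of the form [[c,d],[0,c]]. Consequently, P(w) is indecomposable in all cases. -/
open scoped Classical

open PosetInv

variable {k : Type} [Field k] {P : Type} [PartialOrder P] {I : PosetInv P}

variable {k : Type} [Field k] {P : Type} [PartialOrder P]

section Aux

variable {k : Type} [Field k] {P : Type} [PartialOrder P] {I : PosetInv P}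

lemma mem_carrier_cases {a w : P} (h : w ∈ I.carrier (I.cls a)) : w = a ∨ w = I.σ a := h

lemma genset_cls_empty {a : P} {V0 : Type} [AddCommGroup V0]
    (g : ↥(I.carrier (I.cls a)) → V0) (h1 : ¬ a < I.σ a) (h2 : ¬ I.σ a < a) :
    genset I a g (I.cls a) = ∅ := by
  ext f
  simp only [Set.mem_empty_iff_false, iff_false]
  rintro ⟨x', c, hlt, rfl⟩
  obtain hc | hc := mem_carrier_cases c.2 <;> obtain hx | hx := mem_carrier_cases x'.2 <;>
      rw [hc, hx] at hlt
  exacts [lt_irrefl _ hlt, h1 hlt, h2 hlt, lt_irrefl _ hlt]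

lemma genset_cls_lt {a : P} {V0 : Type} [AddCommGroup V0]
    (g : ↥(I.carrier (I.cls a)) → V0) (hab : a < I.σ a) :
    genset I a g (I.cls a) =
      {fun w => if w = (⟨I.σ a, I.sigma_mem_cls a⟩ : ↥(I.carrier (I.cls a))) then
        g ⟨a, I.mem_cls a⟩ else 0} := by
  ext f
  constructor
  · rintro ⟨x', c, hlt, rfl⟩
    obtain hc | hc := mem_carrier_cases c.2 <;> obtain hx | hx := mem_carrier_cases x'.2
    · rw [hc, hx] at hlt; exact absurd hlt (lt_irrefl _)
    · have hc' : c = ⟨a, I.mem_cls a⟩ := Subtype.ext hc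
      have hx' : x' = ⟨I.σ a, I.sigma_mem_cls a⟩ := Subtype.ext hx
      rw [hc', hx']; rfl
    · rw [hc, hx] at hlt; exact absurd hlt (asymm hab)
    · rw [hc, hx] at hlt; exact absurd hlt (lt_irrefl _)
  · rintro rfl
    exact ⟨⟨I.σ a, I.sigma_mem_cls a⟩, ⟨a, I.mem_cls a⟩, hab, rfl⟩

lemma genset_cls_gt {a : P} {V0 : Type} [AddCommGroup V0]
    (g : ↥(I.carrier (I.cls a)) → V0) (hba : I.σ a < a) :
    genset I a g (I.cls a) =
      {fun w => if w = (⟨a, I.mem_cls a⟩ : ↥(I.carrier (I.cls a))) then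
        g ⟨I.σ a, I.sigma_mem_cls a⟩ else 0} := by
  ext f
  constructor
  · rintro ⟨x', c, hlt, rfl⟩
    obtain hc | hc := mem_carrier_cases c.2 <;> obtain hx | hx := mem_carrier_cases x'.2
    · rw [hc, hx] at hlt; exact absurd hlt (lt_irrefl _)
    · rw [hc, hx] at hlt; exact absurd hlt (asymm hba)
    · have hc' : c = ⟨I.σ a, I.sigma_mem_cls a⟩ := Subtype.ext hc
      have hx' : x' = ⟨a, I.mem_cls a⟩ := Subtype.ext hx
      rw [hc', hx']; rfl
    · rw [hc, hx] at hlt; exact absurd hlt (lt_irrefl _)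
  · rintro rfl
    exact ⟨⟨a, I.mem_cls a⟩, ⟨I.σ a, I.sigma_mem_cls a⟩, hba, rfl⟩

/-- The map `f.φ ∘ B` belongs to the span defining `Q_w`. -/
lemma phi_basis_mem {a : P} (Q : RepI k I) (B : Module.Basis ↥(I.carrier (I.cls a)) k Q.V0)
    (hw : Q.Vz (I.cls a) = Submodule.span k ({⇑B} ∪ genset I a ⇑B (I.cls a)))
    (f : Hom Q Q) :
    (fun w => f.φ (B w)) ∈ Submodule.span k ({⇑B} ∪ genset I a ⇑B (I.cls a)) := by
  rw [← hw]
  exact f.maps _ ⇑B (by rw [hw]; exact Submodule.subset_span (Or.inl rfl))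

/-- Extraction of the triangular form of an endomorphism when
`genset` at the distinguished class is a single indicator function. -/
lemma tri_extract {a : P} (Q : RepI k I) (B : Module.Basis ↥(I.carrier (I.cls a)) k Q.V0)
    (hw : Q.Vz (I.cls a) = Submodule.span k ({⇑B} ∪ genset I a ⇑B (I.cls a)))
    (p q : ↥(I.carrier (I.cls a)))
    (hgen : genset I a ⇑B (I.cls a) = {fun w => if w = p then B q else 0})
    (f : Hom Q Q) :
    ∃ α β : k, ∀ w, f.φ (B w) = α • B w + β • (if w = p then B q else 0) := by
  have h := phi_basis_mem Q B hw f
  rw [hgen, Set.singleton_union] at h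
  obtain ⟨α, β, hq⟩ := Submodule.mem_span_pair.mp h
  refine ⟨α, β, fun w => ?_⟩
  have h2 := congrFun hq w
  simp only [Pi.add_apply, Pi.smul_apply] at h2
  exact h2.symm

lemma idem_tri {V0 : Type} [AddCommGroup V0] [Module k V0] (φ : V0 →ₗ[k] V0)
    (hφ : ∀ x, φ (φ x) = φ x) (u v : V0) (hu : u ≠ 0) (α β : k)
    (h1 : φ u = α • u) (h2 : φ v = α • v + β • u) :
    (α = 0 ∨ α = 1) ∧ β = 0 := by
  have hα : α = 0 ∨ α = 1 := by
    have h := hφ u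
    rw [h1, map_smul, h1, smul_smul] at h
    have h' : (α * (α - 1)) • u = 0 := by
      rw [mul_sub, mul_one, sub_smul, h, sub_self]
    rcases smul_eq_zero.mp h' with h'' | h''
    · rcases mul_eq_zero.mp h'' with h3 | h3
      · exact Or.inl h3
      · exact Or.inr (sub_eq_zero.mp h3)
    · exact absurd h'' hu
  have hβu : β • u = 0 := by
    have h := hφ v
    rw [h2] at h
    simp only [map_add, map_smul] at h
    rw [h1, h2] at h
    rcases hα with rfl | rfl
    · simpa using h.symm
    · simp only [one_smul] at h
      rw [add_assoc] at h
      exact add_eq_right.mp (add_left_cancel h)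
  exact ⟨hα, (smul_eq_zero.mp hβu).resolve_right hu⟩

end Aux

section Aux2

variable {k : Type} [Field k] {P : Type} [PartialOrder P] {I : PosetInv P}

/-- The nilpotent endomorphism `e₂ ↦ e₁, e₁ ↦ 0` preserves all the subspaces of `P(w)`
when `a < σ a`. -/
lemma N_maps {a : P} (Q : RepI k I) (B : Module.Basis ↥(I.carrier (I.cls a)) k Q.V0)
    (hw : Q.Vz (I.cls a) = Submodule.span k ({⇑B} ∪ genset I a ⇑B (I.cls a)))
    (hz : ∀ z, z ≠ I.cls a → Q.Vz z = Submodule.span k (genset I a ⇑B z))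
    (hab : a < I.σ a) :
    ∀ z, ∀ h ∈ Q.Vz z,
      (fun w => (B.constr k (fun w : ↥(I.carrier (I.cls a)) =>
          if (w : P) = I.σ a then B ⟨a, I.mem_cls a⟩ else 0)) (h w)) ∈ Q.Vz z := by
  set N := B.constr k (fun w : ↥(I.carrier (I.cls a)) =>
    if (w : P) = I.σ a then B ⟨a, I.mem_cls a⟩ else 0) with hN
  have fact1 : ∀ (z : I.Classes) (x' : ↥(I.carrier z)) (c : ↥(I.carrier (I.cls a))),
      (c : P) < (x' : P) →
      (fun w => N (if w = x' then B c else 0)) ∈ Submodule.span k (genset I a ⇑B z) := by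
    intro z x' c hlt
    have hfn : (fun w => N (if w = x' then B c else 0))
        = fun w => if w = x' then N (B c) else 0 := by
      funext w; split <;> simp
    rw [hfn]
    by_cases hc : (c : P) = I.σ a
    · have hNB : N (B c) = B ⟨a, I.mem_cls a⟩ := by
        rw [hN, Module.Basis.constr_basis, if_pos hc]
      rw [hNB]
      have hac : a < (c : P) := by rw [hc]; exact hab
      exact Submodule.subset_span ⟨x', ⟨a, I.mem_cls a⟩, lt_trans hac hlt, rfl⟩
    · have hNB : N (B c) = 0 := by rw [hN, Module.Basis.constr_basis, if_neg hc]
      rw [hNB]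
      have h0 : (fun w : ↥(I.carrier z) => if w = x' then (0 : Q.V0) else 0) = 0 := by
        funext w; simp
      rw [h0]; exact zero_mem _
  have fact2 : (fun w => N (B w)) ∈ Submodule.span k (genset I a ⇑B (I.cls a)) := by
    have hfn : (fun w => N (B w))
        = fun w => if w = (⟨I.σ a, I.sigma_mem_cls a⟩ : ↥(I.carrier (I.cls a))) then
            B ⟨a, I.mem_cls a⟩ else 0 := by
      funext w
      rw [hN, Module.Basis.constr_basis]
      by_cases hcond : w = (⟨I.σ a, I.sigma_mem_cls a⟩ : ↥(I.carrier (I.cls a)))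
      · rw [if_pos hcond, if_pos (by rw [hcond])]
      · rw [if_neg hcond, if_neg (fun hv => hcond (Subtype.ext hv))]
    rw [hfn]
    exact Submodule.subset_span ⟨⟨I.σ a, I.sigma_mem_cls a⟩, ⟨a, I.mem_cls a⟩, hab, rfl⟩
  intro z h hh
  by_cases hza : z = I.cls a
  · subst hza
    rw [hw] at hh ⊢
    induction hh using Submodule.span_induction with
    | mem x hx =>
      rcases hx with hx | hx
      · rw [Set.mem_singleton_iff] at hx; subst hx
        exact Submodule.span_mono Set.subset_union_right fact2
      · obtain ⟨x', c, hlt, rfl⟩ := hx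
        exact Submodule.span_mono Set.subset_union_right (fact1 _ x' c hlt)
    | zero =>
      have h0 : (fun w => N ((0 : ↥(I.carrier (I.cls a)) → Q.V0) w)) = 0 := by funext w; simp
      rw [h0]; exact zero_mem _
    | add x y hx hy ihx ihy =>
      have heq : (fun w => N ((x + y) w)) = (fun w => N (x w)) + fun w => N (y w) := by
        funext w; simp
      rw [heq]; exact add_mem ihx ihy
    | smul t x hx ih =>
      have heq : (fun w => N ((t • x) w)) = t • fun w => N (x w) := by funext w; simp
      rw [heq]; exact Submodule.smul_mem _ _ ih
  · rw [hz z hza] at hh ⊢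
    induction hh using Submodule.span_induction with
    | mem x hx =>
      obtain ⟨x', c, hlt, rfl⟩ := hx
      exact fact1 _ x' c hlt
    | zero =>
      have h0 : (fun w => N ((0 : ↥(I.carrier z) → Q.V0) w)) = 0 := by funext w; simp
      rw [h0]; exact zero_mem _
    | add x y hx hy ihx ihy =>
      have heq : (fun w => N ((x + y) w)) = (fun w => N (x w)) + fun w => N (y w) := by
        funext w; simp
      rw [heq]; exact add_mem ihx ihy
    | smul t x hx ih =>
      have heq : (fun w => N ((t • x) w)) = t • fun w => N (x w) := by funext w; simp
      rw [heq]; exact Submodule.smul_mem _ _ ih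

end Aux2
/-- Let `w = (a, b)` with `b = σ a` and let `P(w)` be as above, with
`e₁ = B a`, `e₂ = B b`.  If `a` and `b` are incomparable (or `w` a singleton) then every
endomorphism of `P(w)` is a scalar, so `End P(w) ≅ k`; if `a < b` then the endomorphisms of
`P(w)` are exactly the maps with matrix `[[c, d], [0, c]]` (i.e. `e₁ ↦ c e₁`,
`e₂ ↦ c e₂ + d e₁`), so `End P(w) ≅ k[x]/(x²)`.  Consequently `P(w)` is indecomposable:
its only idempotent endomorphisms are `0` and the identity. -/
theorem Pw_endomorphisms
    {k : Type} [Field k] {P : Type} [PartialOrder P] {I : PosetInv P}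
    (a : P) (Q : RepI k I) (B : Module.Basis ↥(I.carrier (I.cls a)) k Q.V0)
    (hw : Q.Vz (I.cls a) = Submodule.span k ({⇑B} ∪ genset I a ⇑B (I.cls a)))
    (hz : ∀ z, z ≠ I.cls a → Q.Vz z = Submodule.span k (genset I a ⇑B z)) :
    -- incomparable (or singleton) case: `End P(w) ≅ k`
    ((¬ a < I.σ a ∧ ¬ I.σ a < a) →
      ((∀ f : Hom Q Q, ∃ c : k, f.φ = c • LinearMap.id) ∧
        ∀ c : k, ∃ f : Hom Q Q, f.φ = c • LinearMap.id)) ∧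
    -- case `a < b`:  `End P(w) ≅ k[x]/(x²)`
    (a < I.σ a →
      ((∀ f : Hom Q Q, ∃ c d : k,
          f.φ (B ⟨a, I.mem_cls a⟩) = c • B ⟨a, I.mem_cls a⟩ ∧
          f.φ (B ⟨I.σ a, I.sigma_mem_cls a⟩)
            = c • B ⟨I.σ a, I.sigma_mem_cls a⟩ + d • B ⟨a, I.mem_cls a⟩) ∧
        ∀ c d : k, ∃ f : Hom Q Q,
          f.φ (B ⟨a, I.mem_cls a⟩) = c • B ⟨a, I.mem_cls a⟩ ∧
          f.φ (B ⟨I.σ a, I.sigma_mem_cls a⟩)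
            = c • B ⟨I.σ a, I.sigma_mem_cls a⟩ + d • B ⟨a, I.mem_cls a⟩)) ∧
    -- consequently `P(w)` is indecomposable
    (∀ f : Hom Q Q, Hom.comp f f = f → f = Hom.zeroH Q Q ∨ f = Hom.idH Q) := by
  classical
  have hφφgen : ∀ f : Hom Q Q, Hom.comp f f = f → ∀ x, f.φ (f.φ x) = f.φ x := by
    intro f hf x
    exact LinearMap.congr_fun (congrArg Hom.φ hf) x
  refine ⟨?_, ?_, ?_⟩
  · rintro ⟨h1, h2⟩
    constructor
    · intro f
      have h := phi_basis_mem Q B hw f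
      rw [genset_cls_empty ⇑B h1 h2, Set.union_empty] at h
      obtain ⟨c, hc⟩ := Submodule.mem_span_singleton.mp h
      refine ⟨c, B.ext fun w => ?_⟩
      have h2 := congrFun hc w
      simp only [Pi.smul_apply] at h2
      simpa using h2.symm
    · intro c
      refine ⟨⟨c • LinearMap.id, ?_⟩, rfl⟩
      intro z h hh
      have heq : (fun w => (c • (LinearMap.id : Q.V0 →ₗ[k] Q.V0)) (h w)) = c • h := by
        funext w; simp
      rw [heq]
      exact Submodule.smul_mem _ _ hh
  · intro hab
    have hne : (⟨a, I.mem_cls a⟩ : ↥(I.carrier (I.cls a))) ≠ ⟨I.σ a, I.sigma_mem_cls a⟩ :=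
      fun h => absurd (congrArg Subtype.val h) (ne_of_lt hab)
    constructor
    · intro f
      obtain ⟨α, β, hform⟩ := tri_extract Q B hw _ _ (genset_cls_lt ⇑B hab) f
      refine ⟨α, β, ?_, ?_⟩
      · have h := hform ⟨a, I.mem_cls a⟩
        rw [if_neg hne] at h
        simpa using h
      · have h := hform ⟨I.σ a, I.sigma_mem_cls a⟩
        rw [if_pos rfl] at h
        exact h
    · intro c d
      set N := B.constr k (fun w : ↥(I.carrier (I.cls a)) =>
        if (w : P) = I.σ a then B ⟨a, I.mem_cls a⟩ else 0) with hN
      set φ₀ : Q.V0 →ₗ[k] Q.V0 := c • LinearMap.id + d • N with hφ₀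
      refine ⟨⟨φ₀, ?_⟩, ?_, ?_⟩
      · intro z h hh
        have heq : (fun w => φ₀ (h w))
            = c • h + d • fun w => N (h w) := by funext w; simp [hφ₀]
        rw [heq]
        exact add_mem (Submodule.smul_mem _ _ hh)
          (Submodule.smul_mem _ _ (N_maps Q B hw hz hab z h hh))
      · have hNe1 : N (B ⟨a, I.mem_cls a⟩) = 0 := by
          rw [hN, Module.Basis.constr_basis, if_neg (ne_of_lt hab)]
        simp [hφ₀, hNe1]
      · have hNe2 : N (B ⟨I.σ a, I.sigma_mem_cls a⟩) = B ⟨a, I.mem_cls a⟩ := by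
          rw [hN, Module.Basis.constr_basis, if_pos rfl]
        simp [hφ₀, hNe2]
  · intro f hf
    have hφφ := hφφgen f hf
    have key : ∀ (p q : ↥(I.carrier (I.cls a))), q ≠ p →
        genset I a ⇑B (I.cls a) = {fun w => if w = p then B q else 0} →
        f = Hom.zeroH Q Q ∨ f = Hom.idH Q := by
      intro p q hqp hgen
      obtain ⟨α, β, hform⟩ := tri_extract Q B hw p q hgen f
      have h1 : f.φ (B q) = α • B q := by
        have h := hform q; rwa [if_neg hqp, smul_zero, add_zero] at h
      have h2 : f.φ (B p) = α • B p + β • B q := by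
        have h := hform p; rwa [if_pos rfl] at h
      obtain ⟨hα, hβ⟩ := idem_tri f.φ hφφ (B q) (B p) (B.ne_zero q) α β h1 h2
      subst hβ
      rcases hα with rfl | rfl
      · left
        exact Hom.ext (B.ext fun w => by simpa [Hom.zeroH] using hform w)
      · right
        exact Hom.ext (B.ext fun w => by simpa [Hom.idH] using hform w)
    by_cases hab : a < I.σ a
    · exact key _ _ (fun h => (ne_of_lt hab) (congrArg Subtype.val h)) (genset_cls_lt ⇑B hab)
    · by_cases hba : I.σ a < a
      · exact key _ _ (fun h => (ne_of_lt hba) (congrArg Subtype.val h)) (genset_cls_gt ⇑B hba)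
      · have h := phi_basis_mem Q B hw f
        rw [genset_cls_empty ⇑B hab hba, Set.union_empty] at h
        obtain ⟨c, hc⟩ := Submodule.mem_span_singleton.mp h
        have hform : ∀ w, f.φ (B w) = c • B w := fun w => by
          simpa using (congrFun hc w).symm
        have hcc : c * c = c := by
          have h1 := hφφ (B ⟨a, I.mem_cls a⟩)
          rw [hform, map_smul, hform, smul_smul] at h1
          have h' : (c * c - c) • B ⟨a, I.mem_cls a⟩ = 0 := by rw [sub_smul, h1, sub_self]
          rcases smul_eq_zero.mp h' with h'' | h''
          · exact sub_eq_zero.mp h''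
          · exact absurd h'' (B.ne_zero _)
        rcases mul_eq_zero.mp
            (show c * (c - 1) = 0 by rw [mul_sub, mul_one, hcc, sub_self]) with h0 | h0
        · left; exact Hom.ext (B.ext fun w => by simp [hform w, h0, Hom.zeroH])
        · right
          have hc1 : c = 1 := by
            have := sub_eq_zero.mp h0; exact this
          exact Hom.ext (B.ext fun w => by simp [hform w, hc1, Hom.idH])
end

section
/- The algebra A = End(⊕_{z∈θ} P(z) ⊕ P(0)) of endomorphisms of the direct sum of a complete set of indecomposable projectives in Rep(P,θ) is a right peak algebra: the socle of A as a right A-module is a direct sum of copies of the simple projective module e₀A, and e₀A is the unique simple projective right A-module up to isomorphism. -/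
open scoped Classical

open PosetInv

variable {k : Type} [Field k] {P : Type} [PartialOrder P] {I : PosetInv P}

variable {k : Type} [Field k] {P : Type} [PartialOrder P]

/-- `Q` is (isomorphic to) the trivial representation `S = (k, 0)`. -/
def IsS {k : Type} [Field k] {P : Type} [PartialOrder P] {I : PosetInv P}
    (Q : RepI k I) : Prop :=
  Module.finrank k Q.V0 = 1 ∧ ∀ z, Q.Vz z = ⊥

/-- Finite direct sums of representations, computed componentwise. -/
def dsum {k : Type} [Field k] {P : Type} [PartialOrder P] {I : PosetInv P}
    {ι : Type} [Fintype ι] (F : ι → RepI k I) : RepI k I where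
  V0 := ∀ i, (F i).V0
  Vz := fun z =>
    { carrier := {h | ∀ i, (fun w => h w i) ∈ (F i).Vz z}
      add_mem' := fun hp hq i => ((F i).Vz z).add_mem (hp i) (hq i)
      zero_mem' := fun i => ((F i).Vz z).zero_mem
      smul_mem' := fun c _ hp i => ((F i).Vz z).smul_mem c (hp i) }
  compat := by
    intro x y hxy h hh i
    have hc := (F i).compat hxy _ (hh i)
    have he : (fun w : ↥(I.carrier (I.cls x)) =>
        (if (w : P) = x then h ⟨y, I.mem_cls y⟩ else 0) i)
        = fun w : ↥(I.carrier (I.cls x)) =>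
            if (w : P) = x then h ⟨y, I.mem_cls y⟩ i else 0 := by
      funext w; split <;> rfl
    show (fun w : ↥(I.carrier (I.cls x)) =>
        (if (w : P) = x then h ⟨y, I.mem_cls y⟩ else 0) i) ∈ (F i).Vz (I.cls x)
    rw [he]; exact hc

variable {k : Type} [Field k] {P : Type} [PartialOrder P] {I : PosetInv P}

set_option synthInstance.maxHeartbeats 1000000

/-- The morphisms `V → W`, as a `k`-subspace of the space of linear maps `V₀ → W₀`. -/
def homSubmodule (V W : RepI k I) : Submodule k (V.V0 →ₗ[k] W.V0) where
  carrier := {φ | ∀ z, ∀ h ∈ V.Vz z, (fun w => φ (h w)) ∈ W.Vz z}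
  add_mem' := by
    intro φ ψ hφ hψ z h hh
    have := (W.Vz z).add_mem (hφ z h hh) (hψ z h hh)
    exact this
  zero_mem' := fun z _ _ => (W.Vz z).zero_mem
  smul_mem' := by
    intro c φ hφ z h hh
    have := (W.Vz z).smul_mem c (hφ z h hh)
    exact this

/-- The endomorphism algebra `End(V)` of a representation, as a subalgebra of
`End_k(V₀)`. -/
def endSubalgebra (U : RepI k I) : Subalgebra k (Module.End k U.V0) where
  carrier := {φ | ∀ z, ∀ h ∈ U.Vz z, (fun w => φ (h w)) ∈ U.Vz z}
  add_mem' := by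
    intro φ ψ hφ hψ z h hh
    have := (U.Vz z).add_mem (hφ z h hh) (hψ z h hh)
    exact this
  mul_mem' := fun hφ hψ z h hh => hφ z _ (hψ z h hh)
  one_mem' := fun _ _ hh => hh
  zero_mem' := fun z _ _ => (U.Vz z).zero_mem
  algebraMap_mem' := by
    intro c z h hh
    have := (U.Vz z).smul_mem c hh
    exact this

/-- Right action of `End(U)` on `Hom(U, V)` by precomposition, making `Hom(U, V)` a right
`End(U)`-module. -/
instance homModule (U V : RepI k I) :
    Module (↥(endSubalgebra U))ᵐᵒᵖ ↥(homSubmodule U V) where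
  smul a f := ⟨f.1 ∘ₗ (a.unop : Module.End k U.V0),
    fun z h hh => f.2 z _ ((a.unop).2 z h hh)⟩
  one_smul f := Subtype.ext (by ext x; rfl)
  mul_smul a b f := Subtype.ext (by ext x; rfl)
  smul_zero a := Subtype.ext (by ext x; rfl)
  smul_add a f g := Subtype.ext (by ext x; rfl)
  add_smul a b f := Subtype.ext (by ext x; exact map_add f.1 _ _)
  zero_smul f := Subtype.ext (by ext x; exact map_zero f.1)

/-- The socle of a module:  the sum of all its simple submodules. -/
def socle (R : Type) [Ring R] (M : Type) [AddCommGroup M] [Module R M] :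
    Submodule R M :=
  sSup {S : Submodule R M | IsSimpleModule R ↥S}

/-- The idempotent of `End(⊕ᵢ F i)` given by projection onto the summand `i₀`. -/
noncomputable def projHom {ι : Type} [Fintype ι] (F : ι → RepI k I) (i₀ : ι) :
    ↥(endSubalgebra (dsum F)) := by
  refine ⟨{ toFun := fun v j => if j = i₀ then v j else 0
            map_add' := ?_
            map_smul' := ?_ }, ?_⟩
  · intro v w; funext j
    show (if j = i₀ then (v + w) j else 0)
        = (if j = i₀ then v j else 0) + (if j = i₀ then w j else 0)
    by_cases h : j = i₀
    · simp only [if_pos h]; rfl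
    · simp only [if_neg h, add_zero]
  · intro c v; funext j
    show (if j = i₀ then (c • v) j else 0) = c • (if j = i₀ then v j else 0)
    by_cases h : j = i₀
    · simp only [if_pos h]; rfl
    · simp only [if_neg h, smul_zero]
  · intro z h hh i
    by_cases hi : i = i₀
    · subst hi
      have he : (fun w => (fun j => if j = i then h w j else 0) i) = fun w => h w i := by
        funext w; simp
      show (fun w => (fun j => if j = i then h w j else 0) i) ∈ (F i).Vz z
      rw [he]; exact hh i
    · have he : (fun w => (fun j => if j = i₀ then h w j else 0) i)
          = fun _ => (0 : (F i).V0) := by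
        funext w; simp [hi]
      show (fun w => (fun j => if j = i₀ then h w j else 0) i) ∈ (F i).Vz z
      rw [he]; exact ((F i).Vz z).zero_mem

/-- The socle of `Hom(U, V)` is stable under the `k`-action, so it is in particular a
`k`-subspace of `Hom(U, V)`;  this is that subspace. -/
noncomputable def socK (U V : RepI k I) : Submodule k ↥(homSubmodule U V) where
  carrier := {f | f ∈ socle (↥(endSubalgebra U))ᵐᵒᵖ ↥(homSubmodule U V)}
  add_mem' := fun ha hb => (socle _ _).add_mem ha hb
  zero_mem' := (socle _ _).zero_mem
  smul_mem' := by
    intro c f hf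
    have h1 : c • f = (MulOpposite.op
        (⟨algebraMap k (Module.End k U.V0) c, (endSubalgebra U).algebraMap_mem c⟩ :
          ↥(endSubalgebra U))) • f := by
      apply Subtype.ext
      ext x
      show c • (f.1 x) = f.1 (c • x)
      rw [map_smul]
    rw [h1]
    exact Submodule.smul_mem
      (socle (↥(endSubalgebra U))ᵐᵒᵖ ↥(homSubmodule U V)) _ hf

/-- The action of the functor `H = Hom(⊕P(z) ⊕ S, −)` on a morphism `f : V → W`:  the
induced map `Hom(U, V) → Hom(U, W)` of right `End(U)`-modules. -/
noncomputable def Hmap (U : RepI k I) {V W : RepI k I} (f : ↥(homSubmodule V W)) :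
    ↥(homSubmodule U V) →ₗ[(↥(endSubalgebra U))ᵐᵒᵖ] ↥(homSubmodule U W) where
  toFun g := ⟨f.1 ∘ₗ g.1, fun z h hh => f.2 z _ (g.2 z h hh)⟩
  map_add' := by intro g₁ g₂; apply Subtype.ext; ext x; exact map_add f.1 _ _
  map_smul' := by intro a g; apply Subtype.ext; ext x; rfl

/-- Right multiplication by `a ∈ End(U)` on `Hom(U, V)`, as a `k`-linear map. -/
noncomputable def rmulK {U V : RepI k I} (a : ↥(endSubalgebra U)) :
    ↥(homSubmodule U V) →ₗ[k] ↥(homSubmodule U V) where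
  toFun f := ⟨f.1 ∘ₗ (a : Module.End k U.V0), fun z h hh => f.2 z _ (a.2 z h hh)⟩
  map_add' := by intro f g; apply Subtype.ext; ext x; rfl
  map_smul' := by intro c f; apply Subtype.ext; ext x; rfl

noncomputable instance classesFintype {P : Type} [PartialOrder P] [Fintype P]
    (I : PosetInv P) : Fintype I.Classes :=
  @Quotient.fintype P _ I.setoid fun _ _ => Classical.propDecidable _

/-! ## Auxiliary lemmas for the right-peak theorem -/

set_option maxHeartbeats 2000000

section PeakAux

variable {k : Type} [Field k] {P : Type} [PartialOrder P] [Fintype P] {I : PosetInv P}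
variable (F : I.Classes ⊕ Unit → RepI k I)

/-- In a 1-dimensional space, every endomorphism is a scalar. -/
lemma one_dim_endo {V : Type} [AddCommGroup V] [Module k V] [FiniteDimensional k V]
    (h1 : Module.finrank k V = 1) (f : V →ₗ[k] V) : ∃ α : k, ∀ v, f v = α • v := by
  have : Nontrivial V := Module.nontrivial_of_finrank_pos (by rw [h1]; exact Nat.one_pos)
  obtain ⟨b, hb⟩ := exists_ne (0 : V)
  have hsp : Submodule.span k {b} = ⊤ :=
    Submodule.eq_top_of_finrank_eq (by rw [finrank_span_singleton hb, h1])
  obtain ⟨α, hα⟩ := Submodule.mem_span_singleton.mp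
    (by rw [hsp] ; exact Submodule.mem_top : f b ∈ Submodule.span k {b})
  refine ⟨α, fun v => ?_⟩
  obtain ⟨c, hc⟩ := Submodule.mem_span_singleton.mp
    (by rw [hsp] ; exact Submodule.mem_top : v ∈ Submodule.span k {b})
  subst hc
  rw [map_smul, ← hα, smul_comm]

/-- Key computation: every endomorphism of the direct sum kills the `S`-coordinate of
anything supported away from the `S`-summand (because `Hom(P(z), S) = 0`). -/
lemma key_zero
    (hF1 : ∀ z : I.Classes, ∃ a : P, I.cls a = z ∧ IsPw (F (Sum.inl z)) a)
    (hF2 : IsS (F (Sum.inr ())))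
    (a : ↥(endSubalgebra (dsum F))) (u : ∀ j, (F j).V0)
    (hu : u (Sum.inr ()) = 0) :
    (a : Module.End k ((dsum F).V0)) u (Sum.inr ()) = 0 := by
  classical
  have hsingle : ∀ (z : I.Classes) (v : (F (Sum.inl z)).V0),
      (a : Module.End k ((dsum F).V0)) (Pi.single (Sum.inl z) v) (Sum.inr ()) = 0 := by
    intro z v
    obtain ⟨a₀, hcls, B, hB1, _⟩ := hF1 z
    have hBmem : ⇑B ∈ (F (Sum.inl z)).Vz (I.cls a₀) := by
      rw [hB1]; exact Submodule.subset_span (Or.inl rfl)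
    set h : ↥(I.carrier (I.cls a₀)) → ((dsum F).V0) :=
      fun w => Pi.single (Sum.inl z) (B w) with hh
    have hmem : h ∈ (dsum F).Vz (I.cls a₀) := by
      intro j
      by_cases hj : j = Sum.inl z
      · subst hj
        have he : (fun w => h w (Sum.inl z)) = ⇑B := by
          funext w; simp [hh, Pi.single_eq_same]
        show (fun w => h w (Sum.inl z)) ∈ _
        rw [he]; exact hBmem
      · have he : (fun w => h w j) = (0 : ↥(I.carrier (I.cls a₀)) → (F j).V0) := by
          funext w; simp [hh, Pi.single_eq_of_ne hj]
        show (fun w => h w j) ∈ _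
        rw [he]; exact ((F j).Vz _).zero_mem
    have hmem2 := a.2 (I.cls a₀) h hmem
    have hzer := hmem2 (Sum.inr ())
    rw [hF2.2 (I.cls a₀)] at hzer
    have hzer' : ∀ w, (a : Module.End k ((dsum F).V0)) (h w) (Sum.inr ()) = 0 := by
      intro w
      have := Submodule.mem_bot (R := k) |>.mp hzer
      exact congrFun this w
    -- the composite linear map kills a basis, hence is zero
    set ψ : (F (Sum.inl z)).V0 →ₗ[k] (F (Sum.inr ())).V0 :=
      (LinearMap.proj (Sum.inr ())) ∘ₗ
        ((a : Module.End k ((dsum F).V0)) : (dsum F).V0 →ₗ[k] (dsum F).V0) ∘ₗ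
        (LinearMap.single k (fun j => (F j).V0) (Sum.inl z)) with hψdef
    have hψ : ψ = 0 := by
      apply B.ext
      intro w
      exact hzer' w
    have := LinearMap.congr_fun hψ v
    exact this
  have hu' : u = ∑ j : I.Classes ⊕ Unit, Pi.single j (u j) := (Finset.univ_sum_single u).symm
  rw [hu']
  erw [map_sum]
  erw [Finset.sum_apply]
  refine Finset.sum_eq_zero ?_
  intro j _
  rcases j with z | un
  · exact hsingle z (u (Sum.inl z))
  · cases un
    rw [hu, Pi.single_zero]
    exact congrFun (map_zero (a : Module.End k ((dsum F).V0))) (Sum.inr ())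

/-- The idempotent `e₀` preserves the `S` coordinate. -/
lemma projHom_apply_inr (u : (dsum F).V0) :
    ((projHom F (Sum.inr ()) : Module.End k ((dsum F).V0)) u) (Sum.inr ()) = u (Sum.inr ()) := by
  unfold projHom
  simp
  exact if_pos rfl

lemma projHom_apply_ne (u : (dsum F).V0) {j : I.Classes ⊕ Unit} (hj : j ≠ Sum.inr ()) :
    ((projHom F (Sum.inr ()) : Module.End k ((dsum F).V0)) u) j = 0 := by
  unfold projHom
  simp [hj]
  exact if_neg hj

lemma e0_ne_zero (hF2 : IsS (F (Sum.inr ()))) : projHom F (Sum.inr ()) ≠ 0 := by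
  classical
  have : Nontrivial (F (Sum.inr ())).V0 :=
    Module.nontrivial_of_finrank_pos (by rw [hF2.1]; exact Nat.one_pos)
  obtain ⟨b, hb⟩ := exists_ne (0 : (F (Sum.inr ())).V0)
  intro h
  apply hb
  have := projHom_apply_inr F (Pi.single (Sum.inr ()) b)
  rw [h] at this
  rw [Pi.single_eq_same] at this
  exact this.symm

/-- `e₀ * c` is always a `k`-multiple of `e₀`. -/
lemma e0_mul_eq_smul
    (hF1 : ∀ z : I.Classes, ∃ a : P, I.cls a = z ∧ IsPw (F (Sum.inl z)) a)
    (hF2 : IsS (F (Sum.inr ())))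
    (c : ↥(endSubalgebra (dsum F))) :
    ∃ α : k, projHom F (Sum.inr ()) * c = α • projHom F (Sum.inr ()) := by
  classical
  set f : (F (Sum.inr ())).V0 →ₗ[k] (F (Sum.inr ())).V0 :=
    (LinearMap.proj (Sum.inr ())) ∘ₗ
      ((c : Module.End k ((dsum F).V0)) : (dsum F).V0 →ₗ[k] (dsum F).V0) ∘ₗ
      (LinearMap.single k (fun j => (F j).V0) (Sum.inr ())) with hfdef
  obtain ⟨α, hα⟩ := one_dim_endo hF2.1 f
  refine ⟨α, ?_⟩
  apply Subtype.ext
  apply LinearMap.ext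
  intro u
  funext j
  show ((projHom F (Sum.inr ()) : Module.End k ((dsum F).V0))
      ((c : Module.End k ((dsum F).V0)) u)) j
      = (α • (projHom F (Sum.inr ()) : Module.End k ((dsum F).V0)) u) j
  by_cases hj : j = Sum.inr ()
  · subst hj
    rw [projHom_apply_inr]
    set u₁ : (dsum F).V0 := (Pi.single (Sum.inr ()) (u (Sum.inr ())) : ∀ j, (F j).V0)
      with hu₁
    have hsplit : u = u₁ + (u - u₁) := by abel
    have hkey : (c : Module.End k ((dsum F).V0)) (u - u₁) (Sum.inr ()) = 0 := by
      apply key_zero F hF1 hF2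
      show u (Sum.inr ()) - u₁ (Sum.inr ()) = 0
      rw [hu₁]
      simp [Pi.single_eq_same]
    have h1 : (c : Module.End k ((dsum F).V0)) u (Sum.inr ())
        = f (u (Sum.inr ())) := by
      conv_lhs => rw [hsplit, map_add]
      have hadd : ((c : Module.End k ((dsum F).V0)) u₁
            + (c : Module.End k ((dsum F).V0)) (u - u₁)) (Sum.inr ())
          = (c : Module.End k ((dsum F).V0)) u₁ (Sum.inr ())
            + (c : Module.End k ((dsum F).V0)) (u - u₁) (Sum.inr ()) := rfl
      rw [hadd, hkey, add_zero, hu₁]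
      simp only [hfdef, LinearMap.comp_apply, LinearMap.proj_apply, LinearMap.coe_single]
      rfl
    rw [h1, hα]
    show _ = α • ((projHom F (Sum.inr ()) : Module.End k ((dsum F).V0)) u (Sum.inr ()))
    rw [projHom_apply_inr]
  · rw [projHom_apply_ne F _ hj]
    show (0:(F j).V0) = α • ((projHom F (Sum.inr ()) : Module.End k ((dsum F).V0)) u) j
    rw [projHom_apply_ne F _ hj, smul_zero]

end PeakAux
section PeakAux2

variable {k : Type} [Field k] {P : Type} [PartialOrder P] [Fintype P] {I : PosetInv P}
variable (F : I.Classes ⊕ Unit → RepI k I)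

lemma e0_idem : projHom F (Sum.inr ()) * projHom F (Sum.inr ()) = projHom F (Sum.inr ()) := by
  apply Subtype.ext
  apply LinearMap.ext
  intro u
  show (projHom F (Sum.inr ()) : Module.End k ((dsum F).V0))
      ((projHom F (Sum.inr ()) : Module.End k ((dsum F).V0)) u)
    = (projHom F (Sum.inr ()) : Module.End k ((dsum F).V0)) u
  funext j
  by_cases hj : j = Sum.inr ()
  · subst hj; rw [projHom_apply_inr, projHom_apply_inr]
  · rw [projHom_apply_ne F _ hj, projHom_apply_ne F _ hj]

lemma mem_span_e0_iff
    (hF1 : ∀ z : I.Classes, ∃ a : P, I.cls a = z ∧ IsPw (F (Sum.inl z)) a)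
    (hF2 : IsS (F (Sum.inr ())))
    (x : ↥(endSubalgebra (dsum F))) :
    x ∈ Submodule.span (↥(endSubalgebra (dsum F)))ᵐᵒᵖ {projHom F (Sum.inr ())} ↔
      ∃ α : k, x = α • projHom F (Sum.inr ()) := by
  constructor
  · intro hx
    obtain ⟨a, ha⟩ := Submodule.mem_span_singleton.mp hx
    obtain ⟨α, hα⟩ := e0_mul_eq_smul F hF1 hF2 a.unop
    refine ⟨α, ?_⟩
    rw [← ha, MulOpposite.smul_eq_mul_unop, hα]
  · rintro ⟨α, rfl⟩
    have h1 : α • projHom F (Sum.inr ())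
        = (MulOpposite.op (algebraMap k (↥(endSubalgebra (dsum F))) α))
            • projHom F (Sum.inr ()) := by
      rw [MulOpposite.smul_eq_mul_unop, MulOpposite.unop_op, ← Algebra.commutes,
        ← Algebra.smul_def]
    rw [h1]
    exact Submodule.smul_mem _ _ (Submodule.mem_span_singleton_self _)

lemma span_e0_simple
    (hF1 : ∀ z : I.Classes, ∃ a : P, I.cls a = z ∧ IsPw (F (Sum.inl z)) a)
    (hF2 : IsS (F (Sum.inr ()))) :
    IsSimpleModule (↥(endSubalgebra (dsum F)))ᵐᵒᵖ
      ↥(Submodule.span (↥(endSubalgebra (dsum F)))ᵐᵒᵖ {projHom F (Sum.inr ())}) := by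
  rw [isSimpleModule_iff_isAtom]
  constructor
  · intro hbot
    apply e0_ne_zero F hF2
    have : projHom F (Sum.inr ()) ∈ (⊥ : Submodule (↥(endSubalgebra (dsum F)))ᵐᵒᵖ
        ↥(endSubalgebra (dsum F))) := by
      rw [← hbot]; exact Submodule.mem_span_singleton_self _
    simpa using this
  · intro N hN
    rw [eq_bot_iff]
    intro x hxN
    obtain ⟨α, rfl⟩ := (mem_span_e0_iff F hF1 hF2 x).mp (le_of_lt hN hxN)
    by_cases hα : α = 0
    · subst hα
      simp
    · exfalso
      have he : projHom F (Sum.inr ()) ∈ N := by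
        have hsm := N.smul_mem
          (MulOpposite.op (algebraMap k (↥(endSubalgebra (dsum F))) α⁻¹)) hxN
        have hcalc : (MulOpposite.op (algebraMap k (↥(endSubalgebra (dsum F))) α⁻¹))
            • (α • projHom F (Sum.inr ())) = projHom F (Sum.inr ()) := by
          rw [MulOpposite.smul_eq_mul_unop, MulOpposite.unop_op, smul_mul_assoc,
            ← Algebra.commutes, ← Algebra.smul_def, smul_smul, mul_inv_cancel₀ hα, one_smul]
        rwa [hcalc] at hsm
      exact absurd (Submodule.span_le.mpr (Set.singleton_subset_iff.mpr he)) (not_le_of_gt hN)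

/-- `R` as a left module over `Rᵐᵒᵖ` is isomorphic to `Rᵐᵒᵖ` over itself. -/
def opEquivSelf (R : Type) [Ring R] : Rᵐᵒᵖ ≃ₗ[Rᵐᵒᵖ] R where
  toFun := MulOpposite.unop
  invFun := MulOpposite.op
  map_add' := fun _ _ => rfl
  map_smul' := fun _ _ => rfl
  left_inv := fun _ => rfl
  right_inv := fun _ => rfl

lemma span_e0_projective
    (hF1 : ∀ z : I.Classes, ∃ a : P, I.cls a = z ∧ IsPw (F (Sum.inl z)) a)
    (hF2 : IsS (F (Sum.inr ()))) :
    Module.Projective (↥(endSubalgebra (dsum F)))ᵐᵒᵖ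
      ↥(Submodule.span (↥(endSubalgebra (dsum F)))ᵐᵒᵖ {projHom F (Sum.inr ())}) := by
  haveI : Module.Projective (↥(endSubalgebra (dsum F)))ᵐᵒᵖ ↥(endSubalgebra (dsum F)) :=
    Module.Projective.of_equiv (opEquivSelf _)
  refine Module.Projective.of_split
    (Submodule.span (↥(endSubalgebra (dsum F)))ᵐᵒᵖ {projHom F (Sum.inr ())}).subtype
    { toFun := fun a => ⟨projHom F (Sum.inr ()) * a, by
        rw [show projHom F (Sum.inr ()) * a
            = (MulOpposite.op a) • projHom F (Sum.inr ()) from rfl]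
        exact Submodule.smul_mem _ _ (Submodule.mem_span_singleton_self _)⟩
      map_add' := fun x y => Subtype.ext (mul_add _ _ _)
      map_smul' := fun r x => Subtype.ext (by
        show projHom F (Sum.inr ()) * (r • x) = r • (projHom F (Sum.inr ()) * x)
        rw [MulOpposite.smul_eq_mul_unop, MulOpposite.smul_eq_mul_unop, mul_assoc]) } ?_
  apply LinearMap.ext
  intro x
  apply Subtype.ext
  show projHom F (Sum.inr ()) * (x : ↥(endSubalgebra (dsum F))) = (x : ↥(endSubalgebra (dsum F)))
  obtain ⟨α, hα⟩ := (mem_span_e0_iff F hF1 hF2 _).mp x.2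
  rw [hα, mul_smul_comm, e0_idem]

lemma simple_iso_span
    (hF1 : ∀ z : I.Classes, ∃ a : P, I.cls a = z ∧ IsPw (F (Sum.inl z)) a)
    (hF2 : IsS (F (Sum.inr ())))
    (S : Submodule (↥(endSubalgebra (dsum F)))ᵐᵒᵖ ↥(endSubalgebra (dsum F)))
    (hS : IsSimpleModule (↥(endSubalgebra (dsum F)))ᵐᵒᵖ ↥S) :
    Nonempty (↥S ≃ₗ[(↥(endSubalgebra (dsum F)))ᵐᵒᵖ]
      ↥(Submodule.span (↥(endSubalgebra (dsum F)))ᵐᵒᵖ {projHom F (Sum.inr ())})) := by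
  classical
  haveI := hS
  have hSne : ∃ t ∈ S, t ≠ (0 : ↥(endSubalgebra (dsum F))) := by
    by_contra h
    push_neg at h
    haveI : Nontrivial ↥S := IsSimpleModule.nontrivial (↥(endSubalgebra (dsum F)))ᵐᵒᵖ _
    obtain ⟨x, y, hxy⟩ := exists_pair_ne ↥S
    exact hxy (Subtype.ext (by rw [h _ x.2, h _ y.2]))
  obtain ⟨t, htS, ht0⟩ := hSne
  obtain ⟨u, hu⟩ : ∃ u : (dsum F).V0, (t : Module.End k ((dsum F).V0)) u ≠ 0 := by
    by_contra h
    push_neg at h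
    exact ht0 (Subtype.ext (LinearMap.ext h))
  set bas : Module.Basis Unit k (F (Sum.inr ())).V0 := Module.basisUnique Unit hF2.1 with hbas
  set lmap : (F (Sum.inr ())).V0 →ₗ[k] ((dsum F).V0) := bas.constr k (fun _ => u) with hlmap
  set atil : ((dsum F).V0) →ₗ[k] ((dsum F).V0) :=
    lmap ∘ₗ (LinearMap.proj (Sum.inr ())) with hatil
  have hatilmem : atil ∈ endSubalgebra (dsum F) := by
    intro z h hh
    have h0 : ∀ w, h w (Sum.inr ()) = 0 := by
      have hmem := hh (Sum.inr ())
      rw [hF2.2 z] at hmem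
      intro w
      exact congrFun ((Submodule.mem_bot (R := k)).mp hmem) w
    have he : (fun w => atil (h w)) = (0 : ↥(I.carrier z) → ((dsum F).V0)) := by
      funext w
      show lmap (h w (Sum.inr ())) = 0
      rw [h0 w, map_zero]
    rw [he]
    exact ((dsum F).Vz z).zero_mem
  set aA : ↥(endSubalgebra (dsum F)) := ⟨atil, hatilmem⟩ with haA
  set s := (MulOpposite.op aA) • t with hs
  have hsS : s ∈ S := S.smul_mem _ htS
  have hsval : ∀ v, (s : Module.End k ((dsum F).V0)) v
      = (t : Module.End k ((dsum F).V0)) (atil v) := fun _ => rfl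
  have hconstr : lmap (bas ()) = u := bas.constr_basis k (fun _ => u) ()
  have hteval : (s : Module.End k ((dsum F).V0))
        (Pi.single (Sum.inr ()) (bas ()) : ∀ j, (F j).V0)
      = (t : Module.End k ((dsum F).V0)) u := by
    erw [hsval]
    have harg : atil (Pi.single (Sum.inr ()) (bas ()) : ∀ j, (F j).V0) = u := by
      refine Eq.trans ?_ hconstr
      have hps : (Pi.single (Sum.inr ()) (bas ()) : ∀ j, (F j).V0) (Sum.inr ()) = bas () :=
        Pi.single_eq_same _ _
      exact congrArg lmap hps
    rw [harg]
  have hs0 : s ≠ 0 := by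
    intro h
    apply hu
    rw [← hteval, h]
    simp
    rfl
  have hse : (MulOpposite.op (projHom F (Sum.inr ()))) • s = s := by
    apply Subtype.ext
    apply LinearMap.ext
    intro v
    show (s : Module.End k ((dsum F).V0))
        ((projHom F (Sum.inr ()) : Module.End k ((dsum F).V0)) v)
      = (s : Module.End k ((dsum F).V0)) v
    rw [hsval, hsval]
    congr 1
    show lmap (((projHom F (Sum.inr ()) : Module.End k ((dsum F).V0)) v) (Sum.inr ()))
      = lmap (v (Sum.inr ()))
    rw [projHom_apply_inr]
  let Φ : ↥(Submodule.span (↥(endSubalgebra (dsum F)))ᵐᵒᵖ {projHom F (Sum.inr ())})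
      →ₗ[(↥(endSubalgebra (dsum F)))ᵐᵒᵖ] ↥S :=
    { toFun := fun x => ⟨(MulOpposite.op (x : ↥(endSubalgebra (dsum F)))) • s,
        S.smul_mem _ hsS⟩
      map_add' := fun x y => Subtype.ext (by
        simp [MulOpposite.smul_eq_mul_unop, mul_add])
      map_smul' := fun r x => Subtype.ext (by
        simp [MulOpposite.smul_eq_mul_unop, mul_assoc]) }
  have hΦe : Φ ⟨projHom F (Sum.inr ()), Submodule.mem_span_singleton_self _⟩ ≠ 0 := by
    intro h
    apply hs0
    have hval := congrArg Subtype.val h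
    rw [show (Φ ⟨projHom F (Sum.inr ()), Submodule.mem_span_singleton_self _⟩ :
        ↥(endSubalgebra (dsum F))) = (MulOpposite.op (projHom F (Sum.inr ()))) • s from rfl]
      at hval
    rwa [hse] at hval
  have hinj : Function.Injective Φ := by
    haveI := span_e0_simple F hF1 hF2
    haveI := (span_e0_simple F hF1 hF2).toIsSimpleOrder
    have hker : LinearMap.ker Φ = ⊥ := by
      rcases eq_bot_or_eq_top (LinearMap.ker Φ) with h | h
      · exact h
      · exfalso
        apply hΦe
        have : (⟨projHom F (Sum.inr ()), Submodule.mem_span_singleton_self _⟩ :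
            ↥(Submodule.span (↥(endSubalgebra (dsum F)))ᵐᵒᵖ {projHom F (Sum.inr ())}))
            ∈ LinearMap.ker Φ := by rw [h]; trivial
        exact this
    intro x y hxy
    have hsub : Φ (x - y) = 0 := by rw [map_sub Φ x y, hxy, sub_self]
    have hmem : x - y ∈ LinearMap.ker Φ := LinearMap.mem_ker.mpr hsub
    rw [hker] at hmem
    exact sub_eq_zero.mp ((Submodule.mem_bot _).mp hmem)
  have hsurj : Function.Surjective Φ := by
    haveI := hS.toIsSimpleOrder
    have hrange : LinearMap.range Φ = ⊤ := by
      rcases eq_bot_or_eq_top (LinearMap.range Φ) with h | h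
      · exfalso
        apply hΦe
        have hmem : Φ ⟨projHom F (Sum.inr ()), Submodule.mem_span_singleton_self _⟩
            ∈ LinearMap.range Φ := LinearMap.mem_range_self _ _
        rw [h] at hmem
        exact (Submodule.mem_bot _).mp hmem
      · exact h
    intro y
    have hmem : y ∈ LinearMap.range Φ := by rw [hrange]; trivial
    exact LinearMap.mem_range.mp hmem
  exact ⟨(LinearEquiv.ofBijective Φ ⟨hinj, hsurj⟩).symm⟩

lemma simple_proj_iso
    (hF1 : ∀ z : I.Classes, ∃ a : P, I.cls a = z ∧ IsPw (F (Sum.inl z)) a)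
    (hF2 : IsS (F (Sum.inr ())))
    (M : Type) [AddCommGroup M] [Module (↥(endSubalgebra (dsum F)))ᵐᵒᵖ M]
    (hsimp : IsSimpleModule (↥(endSubalgebra (dsum F)))ᵐᵒᵖ M)
    (hproj : Module.Projective (↥(endSubalgebra (dsum F)))ᵐᵒᵖ M) :
    Nonempty (M ≃ₗ[(↥(endSubalgebra (dsum F)))ᵐᵒᵖ]
      ↥(Submodule.span (↥(endSubalgebra (dsum F)))ᵐᵒᵖ {projHom F (Sum.inr ())})) := by
  classical
  haveI := hsimp
  obtain ⟨g, hg⟩ := hproj.out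
  haveI : Nontrivial M := IsSimpleModule.nontrivial (↥(endSubalgebra (dsum F)))ᵐᵒᵖ _
  obtain ⟨m, hm⟩ := exists_ne (0 : M)
  have hgm : g m ≠ 0 := by
    intro h
    apply hm
    have := hg m
    rw [h, map_zero] at this
    exact this.symm
  obtain ⟨i, hi⟩ := Finsupp.ne_iff.mp hgm
  let E := opEquivSelf (↥(endSubalgebra (dsum F)))
  let h2 : M →ₗ[(↥(endSubalgebra (dsum F)))ᵐᵒᵖ] ↥(endSubalgebra (dsum F)) :=
    E.toLinearMap ∘ₗ (Finsupp.lapply i) ∘ₗ g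
  have hh2m : h2 m ≠ 0 := by
    intro h
    apply hi
    have : MulOpposite.unop (g m i) = 0 := h
    simpa [MulOpposite.unop_eq_zero_iff] using this
  have hinj : Function.Injective h2 := by
    have hker : LinearMap.ker h2 = ⊥ := by
      rcases eq_bot_or_eq_top (LinearMap.ker h2) with h | h
      · exact h
      · exfalso
        apply hh2m
        have : m ∈ LinearMap.ker h2 := by rw [h]; trivial
        exact this
    intro x y hxy
    have hsub : h2 (x - y) = 0 := by rw [map_sub h2 x y, hxy, sub_self]
    have hmem : x - y ∈ LinearMap.ker h2 := LinearMap.mem_ker.mpr hsub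
    rw [hker] at hmem
    exact sub_eq_zero.mp ((Submodule.mem_bot _).mp hmem)
  let eMS := LinearEquiv.ofInjective h2 hinj
  haveI hrs : IsSimpleModule (↥(endSubalgebra (dsum F)))ᵐᵒᵖ ↥(LinearMap.range h2) :=
    IsSimpleModule.congr eMS.symm
  obtain ⟨eS⟩ := simple_iso_span F hF1 hF2 (LinearMap.range h2) hrs
  exact ⟨eMS.trans eS⟩

end PeakAux2

/-- Let `U = ⊕_{z∈θ} P(z) ⊕ S` be the direct sum of a complete set of
indecomposable projectives in `Rep(P,θ)` and `A = End(U)`; let `e₀ ∈ A` be the idempotent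
given by projection onto the summand `S`.  Then `A` is a right peak algebra:  `e₀A` is a
simple projective right `A`-module, every simple submodule of `A_A` (hence `soc(A_A)`,
being their sum) is a copy of `e₀A`, and `e₀A` is the unique simple projective right
`A`-module up to isomorphism. -/
theorem endomorphism_algebra_right_peak
    {k : Type} [Field k] {P : Type} [PartialOrder P] [Fintype P] {I : PosetInv P}
    (F : I.Classes ⊕ Unit → RepI k I)
    (hF1 : ∀ z : I.Classes, ∃ a : P, I.cls a = z ∧ IsPw (F (Sum.inl z)) a)
    (hF2 : IsS (F (Sum.inr ()))) :
    -- `e₀A` is a simple projective right `A`-module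
    IsSimpleModule (↥(endSubalgebra (dsum F)))ᵐᵒᵖ
      ↥(Submodule.span (↥(endSubalgebra (dsum F)))ᵐᵒᵖ
        {projHom F (Sum.inr ())}) ∧
    Module.Projective (↥(endSubalgebra (dsum F)))ᵐᵒᵖ
      ↥(Submodule.span (↥(endSubalgebra (dsum F)))ᵐᵒᵖ
        {projHom F (Sum.inr ())}) ∧
    -- every simple right submodule of `A` is isomorphic to `e₀A`, so `soc(A_A)` is a
    -- direct sum of copies of `e₀A`
    (∀ S : Submodule (↥(endSubalgebra (dsum F)))ᵐᵒᵖ ↥(endSubalgebra (dsum F)),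
      IsSimpleModule (↥(endSubalgebra (dsum F)))ᵐᵒᵖ ↥S →
        Nonempty (↥S ≃ₗ[(↥(endSubalgebra (dsum F)))ᵐᵒᵖ]
          ↥(Submodule.span (↥(endSubalgebra (dsum F)))ᵐᵒᵖ
            {projHom F (Sum.inr ())}))) ∧
    -- `e₀A` is the unique simple projective right `A`-module up to isomorphism
    (∀ (M : Type) [AddCommGroup M] [Module (↥(endSubalgebra (dsum F)))ᵐᵒᵖ M],
      IsSimpleModule (↥(endSubalgebra (dsum F)))ᵐᵒᵖ M →
      Module.Projective (↥(endSubalgebra (dsum F)))ᵐᵒᵖ M →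
        Nonempty (M ≃ₗ[(↥(endSubalgebra (dsum F)))ᵐᵒᵖ]
          ↥(Submodule.span (↥(endSubalgebra (dsum F)))ᵐᵒᵖ
            {projHom F (Sum.inr ())}))) := by
  
  exact ⟨span_e0_simple F hF1 hF2, span_e0_projective F hF1 hF2,
    fun S hS => simple_iso_span F hF1 hF2 S hS,
    fun M _ _ hs hp => simple_proj_iso F hF1 hF2 M hs hp⟩
end

section
/- In Rep(𝔘_n): for all i, Hom(L_{3,i}, L_{3,i}) is 2-dimensional spanned by the identity and the matrix [[0,1],[0,0]]; for i > j, Hom(L_{3,i}, L_{3,j}) is spanned by [[0,1],[0,0]] and [[0,0],[0,1]]; for i < j, Hom(L_{3,i}, L_{3,j}) is spanned by [[1,0],[0,0]] and [[0,1],[0,0]]. Moreover for i > j, Hom(L_{1,i}, L_{3,j}) is spanned by the column maps (0,1)^t and (1,0)^t; for i ≤ j it is spanned by (1,0)^t alone; and Hom(L_{2,i}, L_{3,j}) ≠ 0 implies i < j, in which case it is spanned by (1,0)^t. -/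
open scoped Classical

/-! ## Representations of the poset with involution `𝔘_n`
`𝔘_n` is the chain `a_n < ⋯ < a₁ < b₁ < ⋯ < b_n` with involution classes `z_i = (a_i, b_i)`
(indexed here by `Fin n`, `i : Fin n` corresponding to the class `(a_{i+1}, b_{i+1})`).
A representation is a finite-dimensional space `V₀` together with subspaces
`W i ⊆ V₀ × V₀` (coordinates = values at `a_i` and `b_i`) subject to the conditions
coming from the order:  `a_i < a_j` iff `j < i`, `a_i < b_j` always, `b_i < b_j` iff
`i < j`. -/

structure RepU (k : Type) [Field k] (n : ℕ) where
  V0 : Type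
  [acg : AddCommGroup V0]
  [mod : Module k V0]
  [fd : FiniteDimensional k V0]
  W : Fin n → Submodule k (V0 × V0)
  c1 : ∀ i j : Fin n, j < i → ∀ p ∈ W i, ((p.1, 0) : V0 × V0) ∈ W j
  c2 : ∀ i j : Fin n, ∀ p ∈ W i, ((0, p.1) : V0 × V0) ∈ W j
  c3 : ∀ i j : Fin n, i < j → ∀ p ∈ W i, ((0, p.2) : V0 × V0) ∈ W j

attribute [instance] RepU.acg RepU.mod RepU.fd

variable {k : Type} [Field k] {n : ℕ}

/-- Morphisms of representations of `𝔘_n`. -/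
@[ext]
structure HomU (V V' : RepU k n) where
  φ : V.V0 →ₗ[k] V'.V0
  maps : ∀ i : Fin n, ∀ p ∈ V.W i, ((φ p.1, φ p.2) : V'.V0 × V'.V0) ∈ V'.W i

namespace HomU

def comp {U V W : RepU k n} (g : HomU V W) (f : HomU U V) : HomU U W :=
  ⟨g.φ ∘ₗ f.φ, fun i p hp => g.maps i _ (f.maps i p hp)⟩

def idH (V : RepU k n) : HomU V V := ⟨LinearMap.id, fun _ _ hp => hp⟩

def zeroH (V V' : RepU k n) : HomU V V' :=
  ⟨0, fun i _ _ => by simp; exact (V'.W i).zero_mem⟩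

end HomU

/-- The trivial representation `S`. -/
def IsSU (V : RepU k n) : Prop :=
  Module.finrank k V.V0 = 1 ∧ ∀ j, V.W j = ⊥

/-- `V ≅ L_{1,i}`:  `V₀ = k⟨e⟩`, `W j = 0` for `j < i` and `W j = ⟨(0,e)⟩` for `j ≥ i`. -/
def IsL1U (V : RepU k n) (i : Fin n) : Prop :=
  ∃ e : V.V0, e ≠ 0 ∧ Submodule.span k {e} = ⊤ ∧
    ∀ j, V.W j = if j < i then ⊥ else Submodule.span k {((0, e) : V.V0 × V.V0)}

/-- `V ≅ L_{2,i}`:  `V₀ = k⟨e⟩`, `W j = ⟨(0,e),(e,0)⟩` for `j ≤ i`, `⟨(0,e)⟩` for `j > i`. -/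
def IsL2U (V : RepU k n) (i : Fin n) : Prop :=
  ∃ e : V.V0, e ≠ 0 ∧ Submodule.span k {e} = ⊤ ∧
    ∀ j, V.W j = if j ≤ i then Submodule.span k {((0, e) : V.V0 × V.V0), (e, 0)}
      else Submodule.span k {((0, e) : V.V0 × V.V0)}

/-- `V ≅ L_{3,i}`:  `V₀ = k⟨e₁,e₂⟩`, `W j = ⟨(0,e₁),(e₁,0)⟩` for `j < i`,
`⟨(0,e₁),(e₁,e₂)⟩` for `j = i`, `⟨(0,e₁),(0,e₂)⟩` for `j > i`. -/
def IsL3U (V : RepU k n) (i : Fin n) : Prop :=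
  ∃ e₁ e₂ : V.V0, LinearIndependent k ![e₁, e₂] ∧
    Submodule.span k {e₁, e₂} = ⊤ ∧
    ∀ j, V.W j =
      if j < i then Submodule.span k {((0, e₁) : V.V0 × V.V0), (e₁, 0)}
      else if j = i then Submodule.span k {((0, e₁) : V.V0 × V.V0), (e₁, e₂)}
      else Submodule.span k {((0, e₁) : V.V0 × V.V0), (0, e₂)}

/-- `V` is indecomposable:  nonzero, and its only idempotent endomorphisms are `0` and the
identity. -/
def IndecU (V : RepU k n) : Prop :=
  (∃ v : V.V0, v ≠ 0) ∧
    ∀ f : HomU V V, HomU.comp f f = f → f = HomU.zeroH V V ∨ f = HomU.idH V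

section AuxLemmas

variable {k : Type} [Field k] {M N : Type} [AddCommGroup M] [Module k M]
  [AddCommGroup N] [Module k N]

lemma maps_span2_aux (φ : M →ₗ[k] N) (u v : M × M) (Q : Submodule k (N × N))
    (hu : ((φ u.1, φ u.2) : N × N) ∈ Q) (hv : ((φ v.1, φ v.2) : N × N) ∈ Q) :
    ∀ p ∈ Submodule.span k {u, v}, ((φ p.1, φ p.2) : N × N) ∈ Q := by
  intro p hp
  have hle : Submodule.span k {u, v} ≤ Q.comap (φ.prodMap φ) := by
    rw [Submodule.span_le]
    rintro x hx
    simp only [Set.mem_insert_iff, Set.mem_singleton_iff] at hx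
    rcases hx with rfl | rfl
    · exact hu
    · exact hv
  exact hle hp

lemma maps_span1_aux (φ : M →ₗ[k] N) (u : M × M) (Q : Submodule k (N × N))
    (hu : ((φ u.1, φ u.2) : N × N) ∈ Q) :
    ∀ p ∈ Submodule.span k {u}, ((φ p.1, φ p.2) : N × N) ∈ Q := by
  intro p hp
  have hle : Submodule.span k {u} ≤ Q.comap (φ.prodMap φ) := by
    rw [Submodule.span_le]
    rintro x hx
    simp only [Set.mem_singleton_iff] at hx
    subst hx; exact hu
  exact hle hp

end AuxLemmas

/-- Hom-space computations in `Rep(𝔘_n)`:  with bases `e₁,e₂` of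
`L_{3,i}`, `f₁,f₂` of `L_{3,j}`, `e` of `L_{1,i}` and `g` of `L_{2,i}`:
`Hom(L_{3,i},L_{3,i})` is spanned by `id` and `[[0,1],[0,0]]`;
for `i > j`, `Hom(L_{3,i},L_{3,j})` is spanned by `[[0,1],[0,0]]` and `[[0,0],[0,1]]`;
for `i < j`, by `[[1,0],[0,0]]` and `[[0,1],[0,0]]`;
for `i > j`, `Hom(L_{1,i},L_{3,j})` is spanned by `(0,1)ᵗ` and `(1,0)ᵗ`, and for `i ≤ j`
by `(1,0)ᵗ` alone; and `Hom(L_{2,i},L_{3,j}) ≠ 0` implies `i < j`, in which case it is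
spanned by `(1,0)ᵗ`. -/
theorem hom_spaces_Un
    {k : Type} [Field k] {n : ℕ} (i j : Fin n)
    (A B A₁ A₂ : RepU k n)
    (e₁ e₂ : A.V0) (f₁ f₂ : B.V0) (e : A₁.V0) (g : A₂.V0)
    -- `A = L_{3,i}` with basis `e₁, e₂`
    (hA : LinearIndependent k ![e₁, e₂] ∧ Submodule.span k {e₁, e₂} = ⊤ ∧
      ∀ t, A.W t =
        if t < i then Submodule.span k {((0, e₁) : A.V0 × A.V0), (e₁, 0)}
        else if t = i then Submodule.span k {((0, e₁) : A.V0 × A.V0), (e₁, e₂)}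
        else Submodule.span k {((0, e₁) : A.V0 × A.V0), (0, e₂)})
    -- `B = L_{3,j}` with basis `f₁, f₂`
    (hB : LinearIndependent k ![f₁, f₂] ∧ Submodule.span k {f₁, f₂} = ⊤ ∧
      ∀ t, B.W t =
        if t < j then Submodule.span k {((0, f₁) : B.V0 × B.V0), (f₁, 0)}
        else if t = j then Submodule.span k {((0, f₁) : B.V0 × B.V0), (f₁, f₂)}
        else Submodule.span k {((0, f₁) : B.V0 × B.V0), (0, f₂)})
    -- `A₁ = L_{1,i}` with basis `e`
    (hA₁ : e ≠ 0 ∧ Submodule.span k {e} = ⊤ ∧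
      ∀ t, A₁.W t = if t < i then ⊥ else Submodule.span k {((0, e) : A₁.V0 × A₁.V0)})
    -- `A₂ = L_{2,i}` with basis `g`
    (hA₂ : g ≠ 0 ∧ Submodule.span k {g} = ⊤ ∧
      ∀ t, A₂.W t = if t ≤ i then Submodule.span k {((0, g) : A₂.V0 × A₂.V0), (g, 0)}
        else Submodule.span k {((0, g) : A₂.V0 × A₂.V0)}) :
    -- (a) `Hom(L_{3,i}, L_{3,j})`
    ((i = j →
      ((∀ φ : HomU A B, ∃ c d : k, φ.φ e₁ = c • f₁ ∧ φ.φ e₂ = d • f₁ + c • f₂) ∧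
        ∀ c d : k, ∃ φ : HomU A B, φ.φ e₁ = c • f₁ ∧ φ.φ e₂ = d • f₁ + c • f₂)) ∧
    (j < i →
      ((∀ φ : HomU A B, ∃ c d : k, φ.φ e₁ = 0 ∧ φ.φ e₂ = c • f₁ + d • f₂) ∧
        ∀ c d : k, ∃ φ : HomU A B, φ.φ e₁ = 0 ∧ φ.φ e₂ = c • f₁ + d • f₂)) ∧
    (i < j →
      ((∀ φ : HomU A B, ∃ c d : k, φ.φ e₁ = c • f₁ ∧ φ.φ e₂ = d • f₁) ∧
        ∀ c d : k, ∃ φ : HomU A B, φ.φ e₁ = c • f₁ ∧ φ.φ e₂ = d • f₁))) ∧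
    -- (b) `Hom(L_{1,i}, L_{3,j})`
    ((j < i →
      ((∀ φ : HomU A₁ B, ∃ c d : k, φ.φ e = c • f₁ + d • f₂) ∧
        ∀ c d : k, ∃ φ : HomU A₁ B, φ.φ e = c • f₁ + d • f₂)) ∧
    (i ≤ j →
      ((∀ φ : HomU A₁ B, ∃ c : k, φ.φ e = c • f₁) ∧
        ∀ c : k, ∃ φ : HomU A₁ B, φ.φ e = c • f₁))) ∧
    -- (c) `Hom(L_{2,i}, L_{3,j})`
    ((i < j →
      ((∀ φ : HomU A₂ B, ∃ c : k, φ.φ g = c • f₁) ∧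
        ∀ c : k, ∃ φ : HomU A₂ B, φ.φ g = c • f₁)) ∧
    (¬ i < j → ∀ φ : HomU A₂ B, φ.φ = 0)) := by
  obtain ⟨liA, spA, hWA⟩ := hA
  obtain ⟨liB, spB, hWB⟩ := hB
  obtain ⟨he, spE, hWA1⟩ := hA₁
  obtain ⟨hg, spG, hWA2⟩ := hA₂
  -- basic facts about `B`
  have memTop : ∀ x : B.V0, ∃ c d : k, c • f₁ + d • f₂ = x := by
    intro x
    exact Submodule.mem_span_pair.mp (by rw [spB]; trivial)
  have lipair : ∀ s t : k, s • f₁ + t • f₂ = 0 → s = 0 ∧ t = 0 :=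
    LinearIndependent.pair_iff.mp liB
  have gen1 : ∀ t, ((0, f₁) : B.V0 × B.V0) ∈ B.W t := by
    intro t
    rw [hWB t]
    split_ifs <;> exact Submodule.subset_span (Set.mem_insert _ _)
  have hWBj : B.W j = Submodule.span k {((0, f₁) : B.V0 × B.V0), (f₁, f₂)} := by
    rw [hWB j, if_neg (lt_irrefl j), if_pos rfl]
  -- coefficient extraction from membership in the three kinds of subspaces
  have extractJ : ∀ x y : B.V0,
      ((x, y) : B.V0 × B.V0) ∈ Submodule.span k {((0, f₁) : B.V0 × B.V0), (f₁, f₂)} →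
      ∃ α β : k, x = β • f₁ ∧ y = α • f₁ + β • f₂ := by
    intro x y h
    obtain ⟨α, β, hab⟩ := Submodule.mem_span_pair.mp h
    refine ⟨α, β, ?_, ?_⟩
    · have := congrArg Prod.fst hab
      simpa using this.symm
    · have := congrArg Prod.snd hab
      simpa using this.symm
  have extractLt : ∀ x y : B.V0,
      ((x, y) : B.V0 × B.V0) ∈ Submodule.span k {((0, f₁) : B.V0 × B.V0), (f₁, 0)} →
      ∃ α β : k, x = β • f₁ ∧ y = α • f₁ := by
    intro x y h
    obtain ⟨α, β, hab⟩ := Submodule.mem_span_pair.mp h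
    refine ⟨α, β, ?_, ?_⟩
    · have := congrArg Prod.fst hab
      simpa using this.symm
    · have := congrArg Prod.snd hab
      simpa using this.symm
  -- basis of `A`
  have rangeA : Set.range ![e₁, e₂] = {e₁, e₂} := by
    simp only [Matrix.range_cons, Matrix.range_empty, Set.union_empty, Set.union_singleton]
    exact Set.pair_comm _ _
  let bA : Module.Basis (Fin 2) k A.V0 := Module.Basis.mk liA (by rw [rangeA, spA])
  have bA0 : bA 0 = e₁ := by simp [bA, Module.Basis.mk_apply]
  have bA1 : bA 1 = e₂ := by simp [bA, Module.Basis.mk_apply]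
  -- existence of morphisms `A → B`
  have existsA : ∀ w₁ w₂ : B.V0,
      (∀ t, ((0, w₁) : B.V0 × B.V0) ∈ B.W t) →
      (∀ t, t < i → ((w₁, 0) : B.V0 × B.V0) ∈ B.W t) →
      (((w₁, w₂) : B.V0 × B.V0) ∈ B.W i) →
      (∀ t, i < t → ((0, w₂) : B.V0 × B.V0) ∈ B.W t) →
      ∃ φ : HomU A B, φ.φ e₁ = w₁ ∧ φ.φ e₂ = w₂ := by
    intro w₁ w₂ h1 h2 h3 h4
    set φ := bA.constr k ![w₁, w₂] with hφdef
    have hφ1 : φ e₁ = w₁ := by rw [← bA0]; simp [hφdef, Module.Basis.constr_basis]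
    have hφ2 : φ e₂ = w₂ := by rw [← bA1]; simp [hφdef, Module.Basis.constr_basis]
    refine ⟨⟨φ, ?_⟩, hφ1, hφ2⟩
    intro t p hp
    rw [hWA t] at hp
    split_ifs at hp with h h'
    · refine maps_span2_aux φ _ _ _ ?_ ?_ p hp
      · simpa [hφ1] using h1 t
      · simpa [hφ1] using h2 t h
    · subst h'
      refine maps_span2_aux φ _ _ _ ?_ ?_ p hp
      · simpa [hφ1] using h1 t
      · simpa [hφ1, hφ2] using h3
    · have hi : i < t := lt_of_le_of_ne (not_lt.mp h) (Ne.symm h')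
      refine maps_span2_aux φ _ _ _ ?_ ?_ p hp
      · simpa [hφ1] using h1 t
      · simpa [hφ2] using h4 t hi
  -- basis of `A₁`
  have rangeE : Set.range ![e] = {e} := by simp
  let bE : Module.Basis (Fin 1) k A₁.V0 :=
    Module.Basis.mk (linearIndependent_unique_iff (v := ![e]).mpr (by simpa using he)) (by rw [rangeE, spE])
  have bE0 : bE 0 = e := by simp [bE, Module.Basis.mk_apply]
  have existsA1 : ∀ w : B.V0,
      (∀ t, ¬ t < i → ((0, w) : B.V0 × B.V0) ∈ B.W t) →
      ∃ φ : HomU A₁ B, φ.φ e = w := by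
    intro w h1
    set φ := bE.constr k ![w] with hφdef
    have hφ1 : φ e = w := by rw [← bE0]; simp [hφdef, Module.Basis.constr_basis]
    refine ⟨⟨φ, ?_⟩, hφ1⟩
    intro t p hp
    rw [hWA1 t] at hp
    split_ifs at hp with h
    · simp only [Submodule.mem_bot] at hp
      subst hp; simp; exact (B.W t).zero_mem
    · refine maps_span1_aux φ _ _ ?_ p hp
      simpa [hφ1] using h1 t h
  -- basis of `A₂`
  have rangeG : Set.range ![g] = {g} := by simp
  let bG : Module.Basis (Fin 1) k A₂.V0 :=
    Module.Basis.mk (linearIndependent_unique_iff (v := ![g]).mpr (by simpa using hg)) (by rw [rangeG, spG])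
  have bG0 : bG 0 = g := by simp [bG, Module.Basis.mk_apply]
  have existsA2 : ∀ w : B.V0,
      (∀ t, ((0, w) : B.V0 × B.V0) ∈ B.W t) →
      (∀ t, t ≤ i → ((w, 0) : B.V0 × B.V0) ∈ B.W t) →
      ∃ φ : HomU A₂ B, φ.φ g = w := by
    intro w h1 h2
    set φ := bG.constr k ![w] with hφdef
    have hφ1 : φ g = w := by rw [← bG0]; simp [hφdef, Module.Basis.constr_basis]
    refine ⟨⟨φ, ?_⟩, hφ1⟩
    intro t p hp
    rw [hWA2 t] at hp
    split_ifs at hp with h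
    · refine maps_span2_aux φ _ _ _ ?_ ?_ p hp
      · simpa [hφ1] using h1 t
      · simpa [hφ1] using h2 t h
    · refine maps_span1_aux φ _ _ ?_ p hp
      simpa [hφ1] using h1 t
  refine ⟨⟨?_, ?_, ?_⟩, ⟨?_, ?_⟩, ⟨?_, ?_⟩⟩
  · -- (a) i = j
    rintro rfl
    constructor
    · intro φ
      have hmem : ((e₁, e₂) : A.V0 × A.V0) ∈ A.W i := by
        rw [hWA i, if_neg (lt_irrefl i), if_pos rfl]
        exact Submodule.subset_span (by simp)
      have := φ.maps i _ hmem
      rw [hWBj] at this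
      obtain ⟨α, β, hx, hy⟩ := extractJ _ _ this
      exact ⟨β, α, hx, hy⟩
    · intro c d
      refine existsA (c • f₁) (d • f₁ + c • f₂) ?_ ?_ ?_ ?_
      · intro t
        have : ((0, c • f₁) : B.V0 × B.V0) = c • (0, f₁) := by simp
        rw [this]; exact Submodule.smul_mem _ _ (gen1 t)
      · intro t ht
        rw [hWB t, if_pos ht]
        have : ((c • f₁, 0) : B.V0 × B.V0) = c • (f₁, 0) := by simp
        rw [this]
        exact Submodule.smul_mem _ _ (Submodule.subset_span (by simp))
      · rw [hWBj]
        exact Submodule.mem_span_pair.mpr ⟨d, c, by simp⟩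
      · intro t ht
        rw [hWB t, if_neg (not_lt.mpr ht.le), if_neg ht.ne']
        exact Submodule.mem_span_pair.mpr ⟨d, c, by simp⟩
  · -- (a) j < i
    intro hji
    constructor
    · intro φ
      have hmem : ((e₁, 0) : A.V0 × A.V0) ∈ A.W j := by
        rw [hWA j, if_pos hji]
        exact Submodule.subset_span (by simp)
      have h1 := φ.maps j _ hmem
      rw [hWBj] at h1
      simp only [map_zero] at h1
      obtain ⟨α, β, hx, hy⟩ := extractJ _ _ h1
      obtain ⟨hα, hβ⟩ := lipair α β hy.symm
      obtain ⟨c, d, hcd⟩ := memTop (φ.φ e₂)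
      exact ⟨c, d, by rw [hx, hβ, zero_smul], hcd.symm⟩
    · intro c d
      refine existsA 0 (c • f₁ + d • f₂) ?_ ?_ ?_ ?_
      · intro t; exact (B.W t).zero_mem
      · intro t _; exact (B.W t).zero_mem
      · rw [hWB i, if_neg (by exact fun hlt => absurd (hji.trans hlt) (lt_irrefl j)),
          if_neg hji.ne']
        exact Submodule.mem_span_pair.mpr ⟨c, d, by simp⟩
      · intro t ht
        rw [hWB t, if_neg (not_lt.mpr ((hji.trans ht).le)), if_neg (hji.trans ht).ne']
        exact Submodule.mem_span_pair.mpr ⟨c, d, by simp⟩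
  · -- (a) i < j
    intro hij
    constructor
    · intro φ
      have hmem : ((e₁, e₂) : A.V0 × A.V0) ∈ A.W i := by
        rw [hWA i, if_neg (lt_irrefl i), if_pos rfl]
        exact Submodule.subset_span (by simp)
      have h1 := φ.maps i _ hmem
      rw [hWB i, if_pos hij] at h1
      obtain ⟨α, β, hx, hy⟩ := extractLt _ _ h1
      exact ⟨β, α, hx, hy⟩
    · intro c d
      refine existsA (c • f₁) (d • f₁) ?_ ?_ ?_ ?_
      · intro t
        have : ((0, c • f₁) : B.V0 × B.V0) = c • (0, f₁) := by simp
        rw [this]; exact Submodule.smul_mem _ _ (gen1 t)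
      · intro t ht
        rw [hWB t, if_pos (ht.trans hij)]
        have : ((c • f₁, 0) : B.V0 × B.V0) = c • (f₁, 0) := by simp
        rw [this]
        exact Submodule.smul_mem _ _ (Submodule.subset_span (by simp))
      · rw [hWB i, if_pos hij]
        exact Submodule.mem_span_pair.mpr ⟨d, c, by simp⟩
      · intro t _
        have : ((0, d • f₁) : B.V0 × B.V0) = d • (0, f₁) := by simp
        rw [this]; exact Submodule.smul_mem _ _ (gen1 t)
  · -- (b) j < i
    intro hji
    constructor
    · intro φ
      obtain ⟨c, d, hcd⟩ := memTop (φ.φ e)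
      exact ⟨c, d, hcd.symm⟩
    · intro c d
      refine existsA1 (c • f₁ + d • f₂) ?_
      intro t ht
      have hjt : j < t := hji.trans_le (not_lt.mp ht)
      rw [hWB t, if_neg (not_lt.mpr hjt.le), if_neg hjt.ne']
      exact Submodule.mem_span_pair.mpr ⟨c, d, by simp⟩
  · -- (b) i ≤ j
    intro hij
    constructor
    · intro φ
      have hmem : ((0, e) : A₁.V0 × A₁.V0) ∈ A₁.W j := by
        rw [hWA1 j, if_neg (not_lt.mpr hij)]
        exact Submodule.mem_span_singleton_self _
      have h1 := φ.maps j _ hmem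
      rw [hWBj] at h1
      simp only [map_zero] at h1
      obtain ⟨α, β, hx, hy⟩ := extractJ _ _ h1
      have hβ : β = 0 := by
        have := lipair β 0 (by rw [zero_smul, add_zero]; exact hx.symm)
        exact this.1
      exact ⟨α, by rw [hy, hβ, zero_smul, add_zero]⟩
    · intro c
      refine existsA1 (c • f₁) ?_
      intro t _
      have : ((0, c • f₁) : B.V0 × B.V0) = c • (0, f₁) := by simp
      rw [this]; exact Submodule.smul_mem _ _ (gen1 t)
  · -- (c) i < j
    intro hij
    constructor
    · intro φ
      have hmem : ((0, g) : A₂.V0 × A₂.V0) ∈ A₂.W j := by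
        rw [hWA2 j]
        split_ifs
        · exact Submodule.subset_span (by simp)
        · exact Submodule.mem_span_singleton_self _
      have h1 := φ.maps j _ hmem
      rw [hWBj] at h1
      simp only [map_zero] at h1
      obtain ⟨α, β, hx, hy⟩ := extractJ _ _ h1
      have hβ : β = 0 := by
        have := lipair β 0 (by rw [zero_smul, add_zero]; exact hx.symm)
        exact this.1
      exact ⟨α, by rw [hy, hβ, zero_smul, add_zero]⟩
    · intro c
      refine existsA2 (c • f₁) ?_ ?_
      · intro t
        have : ((0, c • f₁) : B.V0 × B.V0) = c • (0, f₁) := by simp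
        rw [this]; exact Submodule.smul_mem _ _ (gen1 t)
      · intro t ht
        rw [hWB t, if_pos (ht.trans_lt hij)]
        have : ((c • f₁, 0) : B.V0 × B.V0) = c • (f₁, 0) := by simp
        rw [this]
        exact Submodule.smul_mem _ _ (Submodule.subset_span (by simp))
  · -- (c) ¬ i < j
    intro hij φ
    have hji : j ≤ i := not_lt.mp hij
    have hmem : ((g, 0) : A₂.V0 × A₂.V0) ∈ A₂.W j := by
      rw [hWA2 j, if_pos hji]
      exact Submodule.subset_span (by simp)
    have h1 := φ.maps j _ hmem
    rw [hWBj] at h1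
    simp only [map_zero] at h1
    obtain ⟨α, β, hx, hy⟩ := extractJ _ _ h1
    obtain ⟨hα, hβ⟩ := lipair α β hy.symm
    have h0 : φ.φ g = 0 := by rw [hx, hβ, zero_smul]
    ext v
    have hv : v ∈ Submodule.span k {g} := by rw [spG]; trivial
    obtain ⟨c, rfl⟩ := Submodule.mem_span_singleton.mp hv
    simp [map_smul, h0]
end
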